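/- arXiv:1903.11141 — 11 statements merged into one kernel-verified Lean document; each statement's English description precedes it below -/
import Mathlib

section
/- For every integer n ≥ 2, 1/2^n < ζ(n) − 1 < (1/2^n)·(n+1)/(n−1). -/
open Filter Topology Finset

private lemma zsob_aux1 (a : ℝ) (ha : 0 < a) (k : ℕ) :
    a ^ (k+1) + (k+1) * a ^ k ≤ (a + 1) ^ (k+1) := by
  have h2 : (-2:ℝ) ≤ 1/a := le_trans (by norm_num : (-2:ℝ) ≤ 0) (by positivity)
  have h := one_add_mul_le_pow h2 (k+1)
  have h3 := mul_le_mul_of_nonneg_left h (le_of_lt (pow_pos ha (k+1)))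
  push_cast at h3
  calc a ^ (k+1) + (k+1) * a ^ k
      = a^(k+1) * (1 + (k+1) * (1/a)) := by field_simp; ring
    _ ≤ a^(k+1) * (1 + 1/a)^(k+1) := h3
    _ = (a+1)^(k+1) := by rw [← mul_pow]; congr 1; field_simp

private lemma zsob_aux2 (j : ℕ) (x : ℝ) (hx : 2 ≤ x) :
    1/(x+1)^(j+2) < (1/(j+1)) * (1/x^(j+1) - 1/(x+1)^(j+1)) := by
  have hx0 : (0:ℝ) < x := by linarith
  have hb : (0:ℝ) < x + 1 := by linarith
  set A : ℝ := (x+1)^(j+1) with hA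
  have hApos : 0 < A := pow_pos hb _
  have hkey : x^(j+1) + (j+1) * x^j ≤ A := zsob_aux1 x hx0 j
  have step1 : 1/(x+1)^(j+2) < 1/(x*A) := by
    apply one_div_lt_one_div_of_lt (by positivity)
    calc x * A < (x+1) * A := mul_lt_mul_of_pos_right (by linarith) hApos
      _ = (x+1)^(j+2) := by rw [hA]; ring
  have step2 : 1/(x*A) ≤ (1/(j+1)) * (1/x^(j+1) - 1/A) := by
    have heq : (1/((j:ℝ)+1)) * (1/x^(j+1) - 1/A)
        = (A - x^(j+1)) / (((j:ℝ)+1) * x^(j+1) * A) := by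
      rw [div_sub_div _ _ (by positivity : x^(j+1) ≠ (0:ℝ)) (ne_of_gt hApos),
        div_mul_div_comm]
      ring_nf
    rw [heq, div_le_div_iff₀ (by positivity) (by positivity)]
    have h4 : ((j:ℝ)+1) * x^j ≤ A - x^(j+1) := by linarith
    have h5 := mul_le_mul_of_nonneg_right h4 (le_of_lt (mul_pos hx0 hApos))
    calc 1 * (((j:ℝ)+1) * x^(j+1) * A) = (((j:ℝ)+1) * x^j) * (x * A) := by
          rw [pow_succ]; ring
      _ ≤ (A - x^(j+1)) * (x * A) := h5
  linarith

theorem zeta_sub_one_bounds (n : ℕ) (hn : 2 ≤ n) :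
    1 / 2 ^ n < (riemannZeta n).re - 1 ∧
    (riemannZeta n).re - 1 < 1 / 2 ^ n * ((n + 1) / (n - 1) : ℝ) := by
  obtain ⟨j, rfl⟩ : ∃ j, n = j + 2 := ⟨n - 2, by omega⟩
  set n := j + 2 with hn2
  set f : ℕ → ℝ := fun m => 1/(m:ℝ)^n with hf
  have hsum : Summable f := Real.summable_one_div_nat_pow.mpr (by omega)
  have hz : (riemannZeta n).re = ∑' m, f m := by
    rw [zeta_nat_eq_tsum_of_gt_one (by omega : 1 < n)]
    have h : ∑' m : ℕ, 1/(m:ℂ)^n = ((∑' m : ℕ, f m : ℝ) : ℂ) := by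
      rw [Complex.ofReal_tsum]
      congr 1
      funext m
      simp only [hf]
      push_cast
      ring
    rw [h, Complex.ofReal_re]
  have hsplit : ∑' m, f m = 1 + ∑' m, f (m + 2) := by
    rw [← hsum.sum_add_tsum_nat_add 2]
    congr 1
    simp [hf, Finset.sum_range_succ]
  have hS : (riemannZeta n).re - 1 = ∑' m, f (m + 2) := by
    rw [hz, hsplit]; ring
  have hsum2 : Summable (fun m => f (m + 2)) := (summable_nat_add_iff 2).mpr hsum
  have hsum3 : Summable (fun m => f (m + 3)) := (summable_nat_add_iff 3).mpr hsum
  have hsplit2 : ∑' m, f (m + 2) = 1/2^n + ∑' m, f (m + 3) := by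
    rw [Summable.tsum_eq_zero_add hsum2]
    have h1 : f (0 + 2) = 1/2^n := by norm_num [hf]
    have h2 : ∀ b : ℕ, f (b + 1 + 2) = f (b + 3) := fun b => by norm_num
    rw [h1]
  constructor
  · rw [hS, hsplit2]
    have hpos : 0 < ∑' m, f (m + 3) := by
      apply Summable.tsum_pos hsum3 (fun m => by positivity) 0
      simp only [hf]
      positivity
    linarith
  · set g : ℕ → ℝ := fun m => (1/((n:ℝ)-1)) * (1/((m:ℝ)+2)^(n-1)) with hg
    have hnr : (0:ℝ) < (n:ℝ) - 1 := by
      have h : (2:ℝ) ≤ n := by exact_mod_cast hn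
      linarith
    have hgsum : HasSum (fun m => g m - g (m+1)) (g 0) := by
      rw [hasSum_iff_tendsto_nat_of_nonneg]
      · have heq : ∀ N, ∑ i ∈ range N, (g i - g (i+1)) = g 0 - g N := fun N =>
          Finset.sum_range_sub' g N
        simp only [heq]
        have hgt : Tendsto g atTop (𝓝 0) := by
          have h1 : Tendsto (fun m : ℕ => ((m:ℝ)+2)^(n-1)) atTop atTop := by
            apply (tendsto_pow_atTop (by omega : n - 1 ≠ 0)).comp
            exact tendsto_atTop_add_const_right _ 2 tendsto_natCast_atTop_atTop
          have h2 : Tendsto (fun m : ℕ => 1/((m:ℝ)+2)^(n-1)) atTop (𝓝 0) := by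
            simpa [one_div, Function.comp_def] using tendsto_inv_atTop_zero.comp h1
          have h3 := h2.const_mul (1/((n:ℝ)-1))
          simpa [hg, mul_zero] using h3
        simpa using tendsto_const_nhds.sub hgt
      · intro i
        simp only [hg]
        have hmono : ((i:ℝ)+2)^(n-1) ≤ ((i:ℝ)+1+2)^(n-1) :=
          pow_le_pow_left₀ (by positivity) (by linarith) _
        have h1 : 1/(((i:ℝ)+1)+2)^(n-1) ≤ 1/((i:ℝ)+2)^(n-1) := by
          apply one_div_le_one_div_of_le (by positivity)
          linarith
        have h6 := mul_le_mul_of_nonneg_left h1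
          (le_of_lt (by positivity : (0:ℝ) < 1/((n:ℝ)-1)))
        push_cast
        push_cast at h6
        linarith
    have hle : ∀ m : ℕ, f (m + 3) ≤ g m - g (m+1) := by
      intro m
      have haux := zsob_aux2 j ((m:ℝ)+2) (by push_cast; linarith)
      have hcast : f (m + 3) = 1/(((m:ℝ)+2)+1)^(j+2) := by
        simp only [hf, hn2]
        push_cast
        ring_nf
      have hgcast : g m - g (m+1)
          = (1/((j:ℝ)+1)) * (1/((m:ℝ)+2)^(j+1) - 1/(((m:ℝ)+2)+1)^(j+1)) := by
        simp only [hg, hn2]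
        have hj1 : (j + 2 : ℕ) - 1 = j + 1 := by omega
        rw [hj1]
        push_cast
        ring_nf
      rw [hcast, hgcast]
      exact le_of_lt haux
    have hlt0 : f (0 + 3) < g 0 - g 1 := by
      have haux := zsob_aux2 j ((0:ℝ)+2) (by norm_num)
      have hcast : f (0 + 3) = 1/(((0:ℝ)+2)+1)^(j+2) := by
        simp only [hf, hn2]; norm_num
      have hgcast : g 0 - g 1
          = (1/((j:ℝ)+1)) * (1/((0:ℝ)+2)^(j+1) - 1/(((0:ℝ)+2)+1)^(j+1)) := by
        simp only [hg, hn2]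
        have hj1 : (j + 2 : ℕ) - 1 = j + 1 := by omega
        rw [hj1]
        push_cast
        ring_nf
      rw [hcast, hgcast]
      exact haux
    have hlt : ∑' m, f (m + 3) < g 0 := by
      rw [← hgsum.tsum_eq]
      exact Summable.tsum_lt_tsum_of_nonneg
        (fun m => by simp only [hf]; positivity) hle hlt0 hgsum.summable
    have hg0 : g 0 = (1/((n:ℝ)-1)) * (1/2^(n-1)) := by
      simp [hg]
    rw [hS, hsplit2]
    have hfinal : (1:ℝ)/2^n + (1/((n:ℝ)-1)) * (1/2^(n-1)) = 1/2^n * (((n:ℝ)+1)/((n:ℝ)-1)) := by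
      have h2n : (2:ℝ)^n = 2 * 2^(n-1) := by
        rw [← pow_succ']
        have hnn : n - 1 + 1 = n := by omega
        rw [hnn]
      have h2p : (0:ℝ) < 2^(n-1) := by positivity
      rw [h2n]
      field_simp
      ring
    calc 1/2^n + ∑' m, f (m + 3) < 1/2^n + g 0 := by linarith
      _ = 1 / 2 ^ n * (((n:ℝ) + 1) / ((n:ℝ) - 1)) := by rw [hg0, hfinal]
end

section
/- The series ∑_{n=2}^∞ (ζ(n) − 1)/n converges to 1 − γ. -/
open Filter Real Topology Finset

/-- the doubly-indexed summand -/
noncomputable def euFr (n k : ℕ) : ℝ := 1 / (((k : ℝ) + 2) ^ (n + 2) * ((n : ℝ) + 2))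

lemma euFr_nonneg (n k : ℕ) : 0 ≤ euFr n k := by
  unfold euFr; positivity

/-- column sums: over n for fixed k -/
lemma euFr_col (k : ℕ) :
    HasSum (fun n : ℕ => euFr n k)
      (Real.log (((k : ℝ) + 2) / ((k : ℝ) + 1)) - 1 / ((k : ℝ) + 2)) := by
  set x : ℝ := 1 / ((k : ℝ) + 2) with hx
  have hx0 : (0:ℝ) < (k : ℝ) + 2 := by positivity
  have hk0 : (0:ℝ) ≤ (k:ℝ) := Nat.cast_nonneg k
  have hxabs : |x| < 1 := by
    rw [abs_of_pos (by positivity), div_lt_one hx0]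
    linarith
  have h := hasSum_pow_div_log_of_abs_lt_one hxabs
  have h2 := (hasSum_nat_add_iff' (f := fun m : ℕ => x ^ (m + 1) / (m + 1)) 1).mpr h
  have hlog : (1 : ℝ) - x = ((k : ℝ) + 1) / ((k : ℝ) + 2) := by
    rw [hx]; field_simp; ring
  have hfun : ∀ n : ℕ, euFr n k = x ^ (n + 1 + 1) / ((↑(n + 1) : ℝ) + 1) := by
    intro n
    unfold euFr
    rw [hx, div_pow, one_pow, div_div]
    push_cast
    ring_nf
  have hval : -Real.log (1 - x) - ∑ i ∈ range 1, x ^ (i + 1) / ((i : ℝ) + 1)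
      = Real.log (((k : ℝ) + 2) / ((k : ℝ) + 1)) - 1 / ((k : ℝ) + 2) := by
    rw [hlog, Real.log_div (by positivity) (by positivity),
      Real.log_div (by positivity) (by positivity)]
    simp [hx]
  exact hval ▸ h2.congr_fun hfun

/-- sum of the column sums -/
lemma euFr_colsum :
    HasSum (fun k : ℕ => Real.log (((k : ℝ) + 2) / ((k : ℝ) + 1)) - 1 / ((k : ℝ) + 2))
      (1 - Real.eulerMascheroniConstant) := by
  have hnn : ∀ k : ℕ, 0 ≤ Real.log (((k : ℝ) + 2) / ((k : ℝ) + 1)) - 1 / ((k : ℝ) + 2) := by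
    intro k
    have h1 : Real.log (((k : ℝ) + 1) / ((k : ℝ) + 2)) ≤ ((k : ℝ) + 1) / ((k : ℝ) + 2) - 1 :=
      Real.log_le_sub_one_of_pos (by positivity)
    have h2 : Real.log (((k : ℝ) + 2) / ((k : ℝ) + 1))
        = - Real.log (((k : ℝ) + 1) / ((k : ℝ) + 2)) := by
      rw [← Real.log_inv]
      congr 1
      field_simp
    have h3 : ((k : ℝ) + 1) / ((k : ℝ) + 2) - 1 = - (1 / ((k : ℝ) + 2)) := by
      field_simp
      norm_num
    rw [h2]
    linarith [h1.trans_eq h3]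

  rw [hasSum_iff_tendsto_nat_of_nonneg hnn]
  have key : ∀ K : ℕ, ∑ k ∈ range K,
      (Real.log (((k : ℝ) + 2) / ((k : ℝ) + 1)) - 1 / ((k : ℝ) + 2))
      = 1 - ((harmonic (K + 1) : ℝ) - Real.log ((K : ℝ) + 1)) := by
    intro K
    rw [Finset.sum_sub_distrib]
    have hlog : ∑ k ∈ range K, Real.log (((k : ℝ) + 2) / ((k : ℝ) + 1))
        = Real.log ((K : ℝ) + 1) := by
      have : ∀ k ∈ range K, Real.log (((k : ℝ) + 2) / ((k : ℝ) + 1))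
          = Real.log ((k : ℝ) + 1 + 1) - Real.log ((k : ℝ) + 1) := by
        intro k _
        rw [Real.log_div (by positivity) (by positivity)]
        ring_nf
      rw [Finset.sum_congr rfl this]
      have := Finset.sum_range_sub (f := fun k : ℕ => Real.log ((k : ℝ) + 1)) K
      simp only [Nat.cast_add, Nat.cast_one] at this ⊢
      rw [this]
      simp
    have hharm : ∑ k ∈ range K, 1 / ((k : ℝ) + 2) = (harmonic (K + 1) : ℝ) - 1 := by
      have h1 : (harmonic (K + 1) : ℝ) = ∑ i ∈ range (K + 1), 1 / ((i : ℝ) + 1) := by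
        rw [harmonic]
        push_cast
        simp [one_div]
      have hc : ∀ i ∈ range K, 1 / ((↑(i + 1) : ℝ) + 1) = 1 / ((i : ℝ) + 2) := by
        intro i _; push_cast; ring
      rw [h1, Finset.sum_range_succ', Finset.sum_congr rfl hc]
      norm_num
    rw [hlog, hharm]
    ring
  simp only [key]
  have h1 : Tendsto (fun K : ℕ => (harmonic (K + 1) : ℝ) - Real.log ((K : ℝ) + 1)) atTop
      (𝓝 Real.eulerMascheroniConstant) := by
    have := Real.tendsto_harmonic_sub_log.comp (tendsto_add_atTop_nat 1)
    refine this.congr fun K => ?_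
    simp [Function.comp]
  have := tendsto_const_nhds (x := (1:ℝ)) (f := atTop (α := ℕ)) |>.sub h1
  exact this

/-- summability over the product -/
lemma euFr_prod_hasSum :
    HasSum (fun p : ℕ × ℕ => euFr p.1 p.2) (1 - Real.eulerMascheroniConstant) := by
  have hswap_summable : Summable (fun p : ℕ × ℕ => euFr p.2 p.1) := by
    rw [summable_prod_of_nonneg (fun p => euFr_nonneg p.2 p.1)]
    constructor
    · intro k
      exact (euFr_col k).summable
    · refine euFr_colsum.summable.congr fun k => ?_
      exact ((euFr_col k).tsum_eq).symm
  have hswap : HasSum (fun p : ℕ × ℕ => euFr p.2 p.1) (1 - Real.eulerMascheroniConstant) := by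
    rw [hswap_summable.hasSum_iff]
    rw [Summable.tsum_prod hswap_summable]
    rw [← euFr_colsum.tsum_eq]
    exact tsum_congr fun k => (euFr_col k).tsum_eq
  have := (Equiv.prodComm ℕ ℕ).hasSum_iff
      (f := fun p : ℕ × ℕ => euFr p.1 p.2) (a := 1 - Real.eulerMascheroniConstant)
  exact this.mp hswap

/-- row sums converge -/
lemma euFr_row_summable (n : ℕ) : Summable (fun k : ℕ => euFr n k) :=
  euFr_prod_hasSum.summable.prod_factor n

lemma euFr_rowsum :
    HasSum (fun n : ℕ => ∑' k : ℕ, euFr n k) (1 - Real.eulerMascheroniConstant) :=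
  euFr_prod_hasSum.prod_fiberwise fun n => (euFr_row_summable n).hasSum

/-- identify the row sum with the zeta expression -/
lemma euFr_zeta (n : ℕ) :
    (riemannZeta ((n : ℂ) + 2) - 1) / ((n : ℂ) + 2) = ((∑' k : ℕ, euFr n k : ℝ) : ℂ) := by
  have hreal : Summable (fun k : ℕ => 1 / ((k : ℝ)) ^ (n + 2)) := by
    rw [summable_one_div_nat_pow]
    omega
  have hC : Summable (fun k : ℕ => 1 / ((k : ℂ)) ^ (n + 2)) := by
    refine (Complex.summable_ofReal.mpr hreal).congr fun k => ?_
    push_cast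
    ring
  have hz : HasSum (fun k : ℕ => 1 / ((k : ℂ)) ^ (n + 2)) (riemannZeta ((n : ℂ) + 2)) := by
    rw [hC.hasSum_iff]
    have : ((n : ℂ) + 2) = ((n + 2 : ℕ) : ℂ) := by push_cast; ring
    rw [this, zeta_nat_eq_tsum_of_gt_one (by omega)]
  have hz2 := (hasSum_nat_add_iff' (f := fun k : ℕ => 1 / ((k : ℂ)) ^ (n + 2)) 2).mpr hz
  simp only [Finset.sum_range_succ, Finset.sum_range_zero] at hz2
  norm_num at hz2
  have hz3 := hz2.div_const ((n : ℂ) + 2)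
  have hz4 : HasSum (fun k : ℕ => ((euFr n k : ℝ) : ℂ))
      ((riemannZeta ((n : ℂ) + 2) - 1) / ((n : ℂ) + 2)) := by
    refine hz3.congr_fun fun k => ?_
    unfold euFr
    push_cast
    rw [one_div, mul_inv, div_eq_mul_inv]
  have hz5 : HasSum (fun k : ℕ => ((euFr n k : ℝ) : ℂ)) ((∑' k : ℕ, euFr n k : ℝ) : ℂ) :=
    Complex.hasSum_ofReal.mpr (euFr_row_summable n).hasSum
  exact hz4.unique hz5

theorem euler_series :
    HasSum (fun n : ℕ => (riemannZeta ((n : ℂ) + 2) - 1) / ((n : ℂ) + 2))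
      (1 - (Real.eulerMascheroniConstant : ℂ)) := by
  have h := Complex.hasSum_ofReal.mpr euFr_rowsum
  simp only [Complex.ofReal_sub, Complex.ofReal_one] at h
  exact h.congr_fun fun n => euFr_zeta n
end

section
/- The alternating series ∑_{n=2}^∞ (−1)^n ζ(n)/n converges to γ. -/
open Filter Topology Finset Real

-- aux 1: partial sums of 1/(k+2) and telescoping log, combined
lemma aux_partial (K : ℕ) :
    ∑ k ∈ range K, ((1:ℝ)/((k:ℝ)+2) - Real.log (1 + 1/((k:ℝ)+2)))
      = (harmonic (K+1) : ℝ) - Real.log ((K:ℝ)+2) - 1 + Real.log 2 := by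
  induction K with
  | zero => simp [harmonic_succ]
  | succ K ih =>
    rw [Finset.sum_range_succ, ih]
    have h2 : ((K:ℝ)+2) ≠ 0 := by positivity
    have : Real.log (1 + 1/((K:ℝ)+2)) = Real.log ((K:ℝ)+3) - Real.log ((K:ℝ)+2) := by
      rw [← Real.log_div (by positivity) h2]
      congr 1; field_simp; ring
    rw [this, show K+1+1 = (K+1)+1 from rfl, harmonic_succ (K+1)]
    push_cast
    ring_nf

lemma aux_hasSum_u :
    HasSum (fun k : ℕ => (1:ℝ)/((k:ℝ)+2) - Real.log (1 + 1/((k:ℝ)+2)))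
      (Real.eulerMascheroniConstant - 1 + Real.log 2) := by
  have hnn : ∀ k : ℕ, 0 ≤ (1:ℝ)/((k:ℝ)+2) - Real.log (1 + 1/((k:ℝ)+2)) := by
    intro k
    have h1 : (0:ℝ) < 1 + 1/((k:ℝ)+2) := by positivity
    have := Real.log_le_sub_one_of_pos h1
    linarith
  rw [hasSum_iff_tendsto_nat_of_nonneg hnn]
  have h1 : Tendsto (fun K : ℕ => Real.eulerMascheroniSeq (K+1)) atTop
      (𝓝 Real.eulerMascheroniConstant) :=
    Real.tendsto_eulerMascheroniSeq.comp (tendsto_add_atTop_nat 1)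
  have h2 : Tendsto (fun K : ℕ => Real.eulerMascheroniSeq (K+1) - 1 + Real.log 2) atTop
      (𝓝 (Real.eulerMascheroniConstant - 1 + Real.log 2)) := by
    exact (h1.sub_const 1).add_const _
  refine h2.congr fun K => ?_
  rw [Real.eulerMascheroniSeq, aux_partial K]
  push_cast
  ring_nf

lemma aux_inner (k : ℕ) :
    HasSum (fun n : ℕ => ((-1:ℝ)^n / ((n:ℝ)+2)) * (1/((k:ℝ)+2)^(n+2)))
      ((1:ℝ)/((k:ℝ)+2) - Real.log (1 + 1/((k:ℝ)+2))) := by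
  set x : ℝ := -(1/((k:ℝ)+2)) with hx
  have hlt : |x| < 1 := by
    rw [hx, abs_neg, abs_of_pos (by positivity)]
    rw [div_lt_one (by positivity)]
    linarith [Nat.cast_nonneg (α := ℝ) k]
  have h := Real.hasSum_pow_div_log_of_abs_lt_one hlt
  have h2 : HasSum (fun n : ℕ => x ^ (n+1+1) / ((↑(n+1):ℝ)+1))
      (-Real.log (1-x) - ∑ i ∈ range 1, x ^ (i+1) / ((i:ℝ)+1)) :=
    (hasSum_nat_add_iff' 1).mpr h
  convert h2 using 1
  · funext n
    have hk2 : ((k:ℝ)+2) ≠ 0 := by positivity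
    rw [hx]
    rw [show (-(1/((k:ℝ)+2))) ^ (n+1+1) = (-1:ℝ)^(n+2) * (1/((k:ℝ)+2))^(n+2) from by
      rw [neg_div' , neg_pow]; ring_nf]
    rw [show ((-1:ℝ))^(n+2) = (-1:ℝ)^n from by rw [pow_add]; ring]
    rw [div_pow, one_pow]
    push_cast
    field_simp
    ring
  · have h1x : (0:ℝ) < 1 + 1/((k:ℝ)+2) := by positivity
    rw [hx]
    simp only [Finset.range_one, Finset.sum_singleton, pow_one, sub_neg_eq_add]
    push_cast
    ring_nf

lemma aux_b_summable (n : ℕ) : Summable (fun k : ℕ => (1:ℝ)/((k:ℝ)+2)^(n+2)) := by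
  have h : Summable (fun k : ℕ => (1:ℝ)/((k:ℝ))^(n+2)) :=
    summable_one_div_nat_pow.2 (by omega)
  have := (summable_nat_add_iff (f := fun k : ℕ => (1:ℝ)/((k:ℝ))^(n+2)) 2).2 h
  refine this.congr fun k => ?_
  push_cast; ring_nf

lemma aux_k_summable : Summable (fun k : ℕ => (1:ℝ)/((k:ℝ)+1)^2) := by
  have h : Summable (fun k : ℕ => (1:ℝ)/((k:ℝ))^2) :=
    summable_one_div_nat_pow.2 one_lt_two
  have := (summable_nat_add_iff (f := fun k : ℕ => (1:ℝ)/((k:ℝ))^2) 1).2 h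
  refine this.congr fun k => ?_
  push_cast; ring_nf

lemma aux_F_summable :
    Summable (fun p : ℕ × ℕ => ((-1:ℝ)^p.1 / ((p.1:ℝ)+2)) * (1/((p.2:ℝ)+2)^(p.1+2))) := by
  have hbound : Summable (fun p : ℕ × ℕ => ((1:ℝ)/2)^p.1 * ((1:ℝ)/((p.2:ℝ)+1)^2)) :=
    Summable.mul_of_nonneg (f := fun n : ℕ => ((1:ℝ)/2)^n)
      (g := fun k : ℕ => (1:ℝ)/((k:ℝ)+1)^2)
      (summable_geometric_of_lt_one (by norm_num) (by norm_num))
      aux_k_summable (fun n => by positivity) (fun k => by positivity)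
  refine Summable.of_norm_bounded hbound fun p => ?_
  obtain ⟨n, k⟩ := p
  have hk1 : (0:ℝ) < (k:ℝ)+1 := by positivity
  have hk2 : (0:ℝ) < (k:ℝ)+2 := by positivity
  have key : ((k:ℝ)+1)^2 * 2^n ≤ ((k:ℝ)+2)^(n+2) := by
    have h1 : ((2:ℝ))^n ≤ ((k:ℝ)+2)^n := by
      apply pow_le_pow_left₀ (by norm_num)
      linarith [Nat.cast_nonneg (α := ℝ) k]
    have h2 : ((k:ℝ)+1)^2 ≤ ((k:ℝ)+2)^2 := by nlinarith
    calc ((k:ℝ)+1)^2 * 2^n ≤ ((k:ℝ)+2)^2 * ((k:ℝ)+2)^n := by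
          apply mul_le_mul h2 h1 (by positivity) (by positivity)
      _ = ((k:ℝ)+2)^(n+2) := by ring
  dsimp only
  have hnorm : ‖((-1:ℝ)^n/((n:ℝ)+2)) * ((1:ℝ)/((k:ℝ)+2)^(n+2))‖
      = (1/((n:ℝ)+2)) * (1/((k:ℝ)+2)^(n+2)) := by
    rw [norm_mul]
    congr 1
    · rw [norm_div, norm_pow, norm_neg, norm_one, one_pow, Real.norm_eq_abs,
        abs_of_pos (by positivity)]
    · rw [norm_div, norm_one, norm_pow, Real.norm_eq_abs, abs_of_pos (by positivity)]
  rw [hnorm]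
  have hA : (1:ℝ)/((n:ℝ)+2) ≤ 1 := by
    rw [div_le_one (by positivity)]; linarith [Nat.cast_nonneg (α := ℝ) n]
  have hB : (1:ℝ)/((k:ℝ)+2)^(n+2) ≤ ((1:ℝ)/2)^n * (1/((k:ℝ)+1)^2) := by
    rw [div_pow, one_pow, div_mul_div_comm, one_mul]
    apply one_div_le_one_div_of_le (by positivity)
    calc (2:ℝ)^n * ((k:ℝ)+1)^2 = ((k:ℝ)+1)^2 * 2^n := by ring
      _ ≤ ((k:ℝ)+2)^(n+2) := key
  calc (1:ℝ)/((n:ℝ)+2) * (1/((k:ℝ)+2)^(n+2)) ≤ 1 * (1/((k:ℝ)+2)^(n+2)) := by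
        apply mul_le_mul_of_nonneg_right hA (by positivity)
    _ = 1/((k:ℝ)+2)^(n+2) := by ring
    _ ≤ ((1:ℝ)/2)^n * (1/((k:ℝ)+1)^2) := hB

noncomputable def Fd (p : ℕ × ℕ) : ℝ := ((-1:ℝ)^p.1 / ((p.1:ℝ)+2)) * (1/((p.2:ℝ)+2)^(p.1+2))

lemma aux_hasSum_g :
    HasSum (fun n : ℕ => ((-1:ℝ)^n / ((n:ℝ)+2)) * ∑' k : ℕ, (1:ℝ)/((k:ℝ)+2)^(n+2))
      (Real.eulerMascheroniConstant - 1 + Real.log 2) := by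
  have hF : Summable Fd := aux_F_summable
  have hfib : HasSum (fun n : ℕ => ∑' k : ℕ, Fd (n, k)) (∑' p, Fd p) :=
    hF.hasSum.prod_fiberwise (fun n => (hF.prod_factor n).hasSum)
  have hFs : Summable (fun p : ℕ × ℕ => Fd p.swap) := hF.prod_symm
  have hfib2 : HasSum (fun k : ℕ => ∑' n : ℕ, Fd (n, k)) (∑' p : ℕ × ℕ, Fd p.swap) :=
    hFs.hasSum.prod_fiberwise (fun k => (hFs.prod_factor k).hasSum)
  have hswap : (∑' p : ℕ × ℕ, Fd p.swap) = ∑' p, Fd p := (Equiv.prodComm ℕ ℕ).tsum_eq Fd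
  have hval : (∑' p, Fd p) = Real.eulerMascheroniConstant - 1 + Real.log 2 := by
    rw [← hswap]
    have : (fun k : ℕ => ∑' n : ℕ, Fd (n, k))
        = fun k : ℕ => (1:ℝ)/((k:ℝ)+2) - Real.log (1 + 1/((k:ℝ)+2)) := by
      funext k
      exact (aux_inner k).tsum_eq
    rw [this] at hfib2
    exact (hfib2.unique aux_hasSum_u)
  rw [hval] at hfib
  refine hfib.congr_fun fun n => ?_
  rw [← tsum_mul_left]
  rfl

lemma aux_P2N (N : ℕ) :
    ∑ m ∈ range (2*N), (-1:ℝ)^m/((m:ℝ)+1) = (harmonic (2*N) : ℝ) - (harmonic N : ℝ) := by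
  induction N with
  | zero => simp
  | succ N ih =>
    have h2 : 2*(N+1) = (2*N) + 1 + 1 := by ring
    rw [h2, Finset.sum_range_succ, Finset.sum_range_succ, ih, harmonic_succ, harmonic_succ,
      harmonic_succ]
    have e1 : (-1:ℝ)^(2*N) = 1 := by
      rw [pow_mul]; norm_num
    have e2 : (-1:ℝ)^(2*N+1) = -1 := by
      rw [pow_succ, e1]; norm_num
    rw [e1, e2]
    push_cast
    have hN1 : ((N:ℝ)+1) ≠ 0 := by positivity
    have h2N1 : (2*(N:ℝ)+1) ≠ 0 := by positivity
    have h2N2 : (2*(N:ℝ)+2) ≠ 0 := by positivity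
    field_simp
    ring

lemma aux_alt_harmonic :
    Tendsto (fun M : ℕ => ∑ m ∈ range M, (-1:ℝ)^m/((m:ℝ)+1)) atTop (𝓝 (Real.log 2)) := by
  obtain ⟨l, hl⟩ : ∃ l : ℝ, Tendsto (fun M : ℕ => ∑ m ∈ range M, (-1:ℝ)^m/((m:ℝ)+1)) atTop (𝓝 l) := by
    have ha : Antitone (fun m : ℕ => (1:ℝ)/((m:ℝ)+1)) := by
      intro a b hab
      apply one_div_le_one_div_of_le (by positivity)
      have : (a:ℝ) ≤ b := Nat.cast_le.2 hab
      linarith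
    have h0 : Tendsto (fun m : ℕ => (1:ℝ)/((m:ℝ)+1)) atTop (𝓝 0) :=
      tendsto_one_div_add_atTop_nhds_zero_nat
    obtain ⟨l, hl⟩ := ha.tendsto_alternating_series_of_tendsto_zero h0
    exact ⟨l, hl.congr fun M => by
      apply Finset.sum_congr rfl
      intro m _
      rw [mul_one_div]⟩
  -- subsequence 2N tends to log 2
  have hsub : Tendsto (fun N : ℕ => ∑ m ∈ range (2*N), (-1:ℝ)^m/((m:ℝ)+1)) atTop (𝓝 l) :=
    hl.comp (tendsto_atTop_mono (fun n => by simp only [id_eq]; omega) tendsto_id)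
  have hsub2 : Tendsto (fun N : ℕ => ∑ m ∈ range (2*N), (-1:ℝ)^m/((m:ℝ)+1)) atTop
      (𝓝 (Real.log 2)) := by
    have heq : ∀ᶠ N : ℕ in atTop, (harmonic (2*N) : ℝ) - (harmonic N : ℝ)
        = Real.eulerMascheroniSeq' (2*N) - Real.eulerMascheroniSeq' N + Real.log 2 := by
      filter_upwards [eventually_ge_atTop 1] with N hN
      rw [Real.eulerMascheroniSeq', Real.eulerMascheroniSeq']
      have hN0 : N ≠ 0 := by omega
      have h2N0 : 2*N ≠ 0 := by omega
      simp only [hN0, h2N0, if_false]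
      have : Real.log (2*N : ℕ) = Real.log 2 + Real.log N := by
        push_cast
        rw [Real.log_mul (by norm_num) (by positivity)]
      rw [this]
      ring
    have h1 : Tendsto (fun N : ℕ => Real.eulerMascheroniSeq' (2*N)) atTop
        (𝓝 Real.eulerMascheroniConstant) :=
      Real.tendsto_eulerMascheroniSeq'.comp (tendsto_atTop_mono (fun n => by simp only [id_eq]; omega) tendsto_id)
    have h2 : Tendsto (fun N : ℕ => Real.eulerMascheroniSeq' (2*N) - Real.eulerMascheroniSeq' N
        + Real.log 2) atTop (𝓝 (Real.log 2)) := by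
      have := (h1.sub Real.tendsto_eulerMascheroniSeq').add_const (Real.log 2)
      simpa using this
    refine (h2.congr' ?_)
    filter_upwards [heq] with N hN
    rw [aux_P2N, hN]
  rwa [tendsto_nhds_unique hsub hsub2] at hl

lemma aux_alt_part :
    Tendsto (fun N : ℕ => ∑ n ∈ range N, (-1:ℝ)^n/((n:ℝ)+2)) atTop (𝓝 (1 - Real.log 2)) := by
  have key : ∀ N : ℕ, ∑ n ∈ range N, (-1:ℝ)^n/((n:ℝ)+2)
      = 1 - ∑ m ∈ range (N+1), (-1:ℝ)^m/((m:ℝ)+1) := by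
    intro N
    rw [Finset.sum_range_succ' (fun m => (-1:ℝ)^m/((m:ℝ)+1)) N]
    have : ∀ i : ℕ, (-1:ℝ)^(i+1)/((↑(i+1):ℝ)+1) = -((-1:ℝ)^i/((i:ℝ)+2)) := by
      intro i
      rw [pow_succ]
      push_cast
      ring
    rw [Finset.sum_congr rfl (fun i _ => this i)]
    simp [Finset.sum_neg_distrib]
  have h := aux_alt_harmonic.comp (tendsto_add_atTop_nat 1)
  have h2 : Tendsto (fun N : ℕ => 1 - ∑ m ∈ range (N+1), (-1:ℝ)^m/((m:ℝ)+1)) atTop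
      (𝓝 (1 - Real.log 2)) := (tendsto_const_nhds.sub h)
  exact h2.congr fun N => (key N).symm

lemma aux_zeta_eq (n : ℕ) :
    riemannZeta ((n:ℂ)+2) = ((1 + ∑' k : ℕ, (1:ℝ)/((k:ℝ)+2)^(n+2) : ℝ) : ℂ) := by
  have hre : 1 < ((n:ℂ)+2).re := by
    simp only [Complex.add_re, Complex.natCast_re, Complex.re_ofNat]
    linarith [Nat.cast_nonneg (α := ℝ) n]
  rw [zeta_eq_tsum_one_div_nat_add_one_cpow hre]
  have hterm : ∀ k : ℕ, (1:ℂ) / ((k:ℂ)+1)^((n:ℂ)+2)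
      = (((1:ℝ)/((k:ℝ)+1)^(n+2) : ℝ) : ℂ) := by
    intro k
    have : ((n:ℂ)+2) = ((n+2 : ℕ) : ℂ) := by push_cast; ring
    rw [this, Complex.cpow_natCast]
    push_cast
    ring
  rw [tsum_congr hterm, ← Complex.ofReal_tsum, Complex.ofReal_inj]
  have hsum : Summable (fun k : ℕ => (1:ℝ)/((k:ℝ)+1)^(n+2)) := by
    have h : Summable (fun k : ℕ => (1:ℝ)/((k:ℝ))^(n+2)) :=
      summable_one_div_nat_pow.2 (by omega)
    have := (summable_nat_add_iff (f := fun k : ℕ => (1:ℝ)/((k:ℝ))^(n+2)) 1).2 h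
    refine this.congr fun k => ?_
    push_cast; ring_nf
  rw [Summable.tsum_eq_zero_add hsum]
  congr 1
  · norm_num
  · apply tsum_congr
    intro k
    push_cast
    ring_nf

lemma aux_real :
    Tendsto (fun N : ℕ => ∑ n ∈ range N, ((-1:ℝ)^n/((n:ℝ)+2)
        + ((-1:ℝ)^n/((n:ℝ)+2)) * ∑' k : ℕ, (1:ℝ)/((k:ℝ)+2)^(n+2)))
      atTop (𝓝 Real.eulerMascheroniConstant) := by
  have h := aux_alt_part.add aux_hasSum_g.tendsto_sum_nat
  have heq : (1 - Real.log 2) + (Real.eulerMascheroniConstant - 1 + Real.log 2)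
      = Real.eulerMascheroniConstant := by ring
  rw [heq] at h
  refine h.congr fun N => ?_
  rw [← Finset.sum_add_distrib]

theorem alternating_zeta_over_n :
    Tendsto (fun N : ℕ => ∑ n ∈ Finset.range N,
        (-1 : ℂ) ^ (n + 2) * riemannZeta ((n : ℂ) + 2) / ((n : ℂ) + 2))
      atTop (𝓝 (Real.eulerMascheroniConstant : ℂ)) := by
  have h := (Complex.continuous_ofReal.tendsto _).comp aux_real
  refine h.congr fun N => ?_
  simp only [Function.comp_apply, Complex.ofReal_sum]
  apply Finset.sum_congr rfl
  intro n _
  rw [aux_zeta_eq n]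
  have hne : ((n:ℂ)+2) ≠ 0 := by
    intro hcon
    have := congrArg Complex.re hcon
    simp only [Complex.add_re, Complex.natCast_re, Complex.re_ofNat, Complex.zero_re] at this
    linarith [Nat.cast_nonneg (α := ℝ) n]
  have hpow : ((-1:ℂ))^(n+2) = ((-1:ℝ)^n : ℝ) := by
    rw [pow_add]
    push_cast
    ring
  rw [hpow]
  push_cast
  field_simp
end

section
/- ∑_{n=1}^∞ H_n (ζ(n+1) − 1) = ∑_{n=1}^∞ (1/n)·ln(1 + 1/n), where H_n = 1 + 1/2 + ⋯ + 1/n is the n-th harmonic number. -/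
open Finset

private lemma aux_summable_pow (m : ℕ) :
    Summable (fun j : ℕ => (((j : ℝ) + 1)⁻¹) ^ (m + 2)) := by
  have h2 : Summable (fun j : ℕ => (((j : ℝ) + 1)⁻¹) ^ 2) := by
    have h := Real.summable_nat_pow_inv.mpr (by norm_num : 1 < 2)
    have h' := (summable_nat_add_iff 1).mpr h
    refine h'.congr fun j => ?_
    push_cast
    rw [inv_pow]
  refine Summable.of_nonneg_of_le (fun j => by positivity) (fun j => ?_) h2
  refine pow_le_pow_of_le_one (by positivity) ?_ (by omega)
  rw [inv_le_one_iff₀]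
  right
  linarith [Nat.cast_nonneg (α := ℝ) j]

private lemma aux_summable_pow' (m : ℕ) :
    Summable (fun k : ℕ => (((k : ℝ) + 2)⁻¹) ^ (m + 2)) := by
  have h := (summable_nat_add_iff 1).mpr (aux_summable_pow m)
  refine h.congr fun k => ?_
  push_cast
  ring_nf

private lemma harmonic_cast (n : ℕ) :
    (harmonic n : ℝ) = ∑ i ∈ range n, ((i : ℝ) + 1)⁻¹ := by
  unfold harmonic
  push_cast
  rfl

private lemma harmonic_gf {x : ℝ} (h0 : 0 ≤ x) (h1 : x < 1) :
    HasSum (fun n : ℕ => (harmonic (n + 1) : ℝ) * x ^ (n + 1))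
      (-Real.log (1 - x) * (1 - x)⁻¹) := by
  have habs : |x| < 1 := by rwa [abs_of_nonneg h0]
  have ha := Real.hasSum_pow_div_log_of_abs_lt_one habs
  have hb := hasSum_geometric_of_lt_one h0 h1
  have hfn : Summable fun n : ℕ => ‖x ^ (n + 1) / (n + 1 : ℝ)‖ := by
    refine ha.summable.congr fun n => ?_
    rw [Real.norm_eq_abs, abs_of_nonneg (by positivity)]
  have hgn : Summable fun n : ℕ => ‖x ^ n‖ := by
    refine hb.summable.congr fun n => ?_
    rw [Real.norm_eq_abs, abs_of_nonneg (by positivity)]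
  have H := hasSum_sum_range_mul_of_summable_norm hfn hgn
  rw [ha.tsum_eq, hb.tsum_eq] at H
  have heq : (fun n : ℕ => (harmonic (n + 1) : ℝ) * x ^ (n + 1)) =
      fun n : ℕ => ∑ k ∈ range (n + 1), x ^ (k + 1) / ((k : ℝ) + 1) * x ^ (n - k) := by
    funext n
    rw [harmonic_cast, Finset.sum_mul]
    refine Finset.sum_congr rfl fun k hk => ?_
    have hk' : k ≤ n := Nat.lt_succ_iff.mp (Finset.mem_range.mp hk)
    have he : (k + 1) + (n - k) = n + 1 := by omega
    rw [div_mul_eq_mul_div, ← pow_add, he, div_eq_inv_mul]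
  rwa [heq]

private lemma key_hasSum (k : ℕ) :
    HasSum (fun n : ℕ => (harmonic (n + 1) : ℝ) * (((k : ℝ) + 2)⁻¹) ^ (n + 2))
      (((k : ℝ) + 1)⁻¹ * Real.log (1 + ((k : ℝ) + 1)⁻¹)) := by
  set x : ℝ := ((k : ℝ) + 2)⁻¹ with hx
  have hk2 : (0 : ℝ) < (k : ℝ) + 2 := by positivity
  have hk1 : (0 : ℝ) < (k : ℝ) + 1 := by positivity
  have h0 : 0 ≤ x := by positivity
  have h1 : x < 1 := by
    rw [hx, inv_lt_one_iff₀]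
    right
    linarith [Nat.cast_nonneg (α := ℝ) k]
  have H := (harmonic_gf h0 h1).mul_left x
  have heq : (fun n : ℕ => x * ((harmonic (n + 1) : ℝ) * x ^ (n + 1))) =
      fun n : ℕ => (harmonic (n + 1) : ℝ) * x ^ (n + 2) := by
    funext n; ring
  rw [heq] at H
  refine (congrArg (HasSum (fun n : ℕ => (harmonic (n + 1) : ℝ) * x ^ (n + 2))) ?_).mpr H
  have hk2' : ((k : ℝ) + 2) ≠ 0 := ne_of_gt hk2
  have hk1' : ((k : ℝ) + 1) ≠ 0 := ne_of_gt hk1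
  have h1x : 1 - x = ((k : ℝ) + 1) / ((k : ℝ) + 2) := by
    rw [hx]; field_simp; ring
  have h1x' : 1 + ((k : ℝ) + 1)⁻¹ = ((k : ℝ) + 2) / ((k : ℝ) + 1) := by
    field_simp; ring
  rw [h1x, h1x', Real.log_div hk2' hk1', Real.log_div hk1' hk2', hx]
  set L1 := Real.log ((k : ℝ) + 1)
  set L2 := Real.log ((k : ℝ) + 2)
  field_simp
  ring

private lemma zeta_term (n : ℕ) :
    riemannZeta ((n : ℂ) + 2) - 1 =
      ((∑' k : ℕ, (((k : ℝ) + 2)⁻¹) ^ (n + 2) : ℝ) : ℂ) := by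
  have hs : 1 < Complex.re ((n : ℂ) + 2) := by
    simp only [Complex.add_re, Complex.natCast_re, Complex.re_ofNat]
    linarith [Nat.cast_nonneg (α := ℝ) n]
  rw [zeta_eq_tsum_one_div_nat_add_one_cpow hs]
  have hterm : ∀ j : ℕ, (1 : ℂ) / ((j : ℂ) + 1) ^ ((n : ℂ) + 2) =
      (((((j : ℝ) + 1)⁻¹) ^ (n + 2) : ℝ) : ℂ) := by
    intro j
    have : ((n : ℂ) + 2) = ((n + 2 : ℕ) : ℂ) := by push_cast; ring
    rw [this, Complex.cpow_natCast]
    push_cast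
    rw [one_div, ← inv_pow]
  calc (∑' j : ℕ, (1 : ℂ) / ((j : ℂ) + 1) ^ ((n : ℂ) + 2)) - 1
      = ((∑' j : ℕ, (((j : ℝ) + 1)⁻¹) ^ (n + 2) : ℝ) : ℂ) - 1 := by
        rw [Complex.ofReal_tsum]
        exact congrArg (· - 1) (tsum_congr hterm)
    _ = ((∑' k : ℕ, (((k : ℝ) + 2)⁻¹) ^ (n + 2) : ℝ) : ℂ) := by
        rw [Summable.tsum_eq_zero_add (aux_summable_pow n)]
        have h1 : ((((0:ℕ) : ℝ)) + 1)⁻¹ ^ (n + 2) = 1 := by norm_num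
        have h2 : ∀ a : ℕ, ((((a + 1 : ℕ)) : ℝ) + 1)⁻¹ ^ (n + 2) =
            (((a : ℝ) + 2)⁻¹) ^ (n + 2) := fun a => by push_cast; ring_nf
        rw [h1, tsum_congr h2]
        push_cast
        ring

theorem harmonic_zeta_series_eq_log_series :
    ∑' n : ℕ, (harmonic (n + 1) : ℂ) * (riemannZeta ((n : ℂ) + 2) - 1) =
      ((∑' n : ℕ, (1 / ((n : ℝ) + 1)) * Real.log (1 + 1 / ((n : ℝ) + 1)) : ℝ) : ℂ) := by
  -- the double-indexed family
  set g : ℕ → ℕ → ℝ := fun k n => (harmonic (n + 1) : ℝ) * (((k : ℝ) + 2)⁻¹) ^ (n + 2) with hg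
  have hF : Summable (fun p : ℕ × ℕ => g p.1 p.2) := by
    refine (summable_prod_of_nonneg fun p => ?_).mpr ⟨fun k => (key_hasSum k).summable, ?_⟩
    · have : (0:ℝ) ≤ (harmonic (p.2 + 1) : ℝ) := by
        have := (harmonic_pos (Nat.succ_ne_zero p.2)).le
        exact_mod_cast this
      positivity
    · refine Summable.of_nonneg_of_le (fun k => ?_) (fun k => ?_)
        (aux_summable_pow 0)
      · rw [(key_hasSum k).tsum_eq]
        have hk1 : (0:ℝ) < (k : ℝ) + 1 := by positivity
        have hlog : 0 ≤ Real.log (1 + ((k : ℝ) + 1)⁻¹) :=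
          Real.log_nonneg (by nlinarith [inv_pos.mpr hk1])
        positivity
      · rw [(key_hasSum k).tsum_eq]
        have hk1 : (0:ℝ) < (k : ℝ) + 1 := by positivity
        have hlog : Real.log (1 + ((k : ℝ) + 1)⁻¹) ≤ ((k : ℝ) + 1)⁻¹ := by
          have := Real.log_le_sub_one_of_pos (show (0:ℝ) < 1 + ((k : ℝ) + 1)⁻¹ by positivity)
          linarith
        calc ((k : ℝ) + 1)⁻¹ * Real.log (1 + ((k : ℝ) + 1)⁻¹)
            ≤ ((k : ℝ) + 1)⁻¹ * ((k : ℝ) + 1)⁻¹ :=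
              mul_le_mul_of_nonneg_left hlog (by positivity)
          _ = (((k : ℝ) + 1)⁻¹) ^ (0 + 2) := by ring
  -- rewrite the complex series as a real double series
  have step1 : ∑' n : ℕ, (harmonic (n + 1) : ℂ) * (riemannZeta ((n : ℂ) + 2) - 1) =
      ((∑' n : ℕ, ∑' k : ℕ, g k n : ℝ) : ℂ) := by
    rw [Complex.ofReal_tsum]
    refine tsum_congr fun n => ?_
    rw [zeta_term n]
    rw [show (∑' k : ℕ, g k n) = (harmonic (n + 1) : ℝ) *
        ∑' k : ℕ, (((k : ℝ) + 2)⁻¹) ^ (n + 2) from tsum_mul_left]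
    push_cast
    ring
  rw [step1]
  congr 1
  -- Fubini
  have hswap : ∑' n : ℕ, ∑' k : ℕ, g k n = ∑' k : ℕ, ∑' n : ℕ, g k n := by
    have h1 : ∑' p : ℕ × ℕ, g p.1 p.2 = ∑' k : ℕ, ∑' n : ℕ, g k n :=
      Summable.tsum_prod' hF fun k => (key_hasSum k).summable
    have hFs : Summable (fun p : ℕ × ℕ => g p.2 p.1) := hF.prod_symm
    have h2 : ∑' p : ℕ × ℕ, g p.2 p.1 = ∑' n : ℕ, ∑' k : ℕ, g k n := by
      refine Summable.tsum_prod' hFs fun n => ?_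
      refine Summable.of_nonneg_of_le (fun k => ?_) (fun k => ?_)
        ((aux_summable_pow' n).mul_left (harmonic (n + 1) : ℝ))
      · have : (0:ℝ) ≤ (harmonic (n + 1) : ℝ) := by exact_mod_cast (harmonic_pos (Nat.succ_ne_zero n)).le
        positivity
      · exact le_refl _
    have h3 : ∑' p : ℕ × ℕ, g p.2 p.1 = ∑' p : ℕ × ℕ, g p.1 p.2 :=
      ((Equiv.prodComm ℕ ℕ).tsum_eq (fun p : ℕ × ℕ => g p.1 p.2))
    rw [← h2, h3, h1]
  rw [hswap]
  refine tsum_congr fun k => ?_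
  rw [(key_hasSum k).tsum_eq, one_div]
end

section
/- ∑_{n=2}^∞ H_n (ζ(n) − 1) = 1 − γ + ∑_{n=1}^∞ H_n (ζ(n+1) − 1). -/
open Real

noncomputable def zr (n : ℕ) : ℝ := ∑' m : ℕ, (1 / (m + 2 : ℝ)) ^ (n + 2)

lemma base_summable : Summable (fun m : ℕ ↦ (1 / (m + 2 : ℝ)) ^ 2) := by
  have h : Summable (fun m : ℕ ↦ 1 / (m : ℝ) ^ 2) := by
    simpa using summable_one_div_nat_pow.mpr (le_refl 2)
  have h2 := (summable_nat_add_iff 2).mpr h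
  refine h2.congr fun m ↦ ?_
  push_cast
  rw [div_pow, one_pow]

lemma half_le (m : ℕ) : (1 / (m + 2 : ℝ)) ≤ 1 / 2 := by
  rw [div_le_div_iff₀ (by positivity) (by norm_num)]
  have : (0:ℝ) ≤ (m:ℝ) := Nat.cast_nonneg m
  linarith

lemma zr_summable (n : ℕ) : Summable (fun m : ℕ ↦ (1 / (m + 2 : ℝ)) ^ (n + 2)) := by
  refine base_summable.of_nonneg_of_le (fun m ↦ by positivity) (fun m ↦ ?_)
  have : (0:ℝ) ≤ (m:ℝ) := Nat.cast_nonneg m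
  exact pow_le_pow_of_le_one (by positivity) (by rw [div_le_one (by linarith)]; linarith) (by omega)

lemma zr_nonneg (n : ℕ) : 0 ≤ zr n :=
  tsum_nonneg fun m ↦ by positivity

lemma zr_le (n : ℕ) : zr n ≤ (1 / 2) ^ n * zr 0 := by
  have : zr n ≤ ∑' m : ℕ, (1 / 2 : ℝ) ^ n * (1 / (m + 2 : ℝ)) ^ 2 := by
    refine Summable.tsum_le_tsum (fun m ↦ ?_) (zr_summable n) (base_summable.mul_left _)
    calc (1 / (m + 2 : ℝ)) ^ (n + 2) = (1 / (m + 2 : ℝ)) ^ n * (1 / (m + 2 : ℝ)) ^ 2 := by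
          rw [← pow_add]
      _ ≤ (1 / 2 : ℝ) ^ n * (1 / (m + 2 : ℝ)) ^ 2 := by
          refine mul_le_mul_of_nonneg_right ?_ (by positivity)
          exact pow_le_pow_left₀ (by positivity) (half_le m) n
  calc zr n ≤ _ := this
    _ = (1 / 2) ^ n * zr 0 := by rw [tsum_mul_left]; simp [zr]

lemma real_split (n : ℕ) : ∑' m : ℕ, 1 / (m : ℝ) ^ (n + 2) = 1 + zr n := by
  have hsum : Summable (fun m : ℕ ↦ 1 / (m : ℝ) ^ (n + 2)) :=
    summable_one_div_nat_pow.mpr (by omega)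
  rw [Summable.tsum_eq_zero_add hsum, Summable.tsum_eq_zero_add ((summable_nat_add_iff 1).mpr hsum)]
  norm_num
  refine tsum_congr fun m ↦ ?_
  rw [div_pow, one_pow]
  push_cast
  ring_nf

lemma zeta_eq (n : ℕ) : riemannZeta ((n : ℂ) + 2) - 1 = ((zr n : ℝ) : ℂ) := by
  have h : ((n : ℂ) + 2) = ((n + 2 : ℕ) : ℂ) := by push_cast; ring
  rw [h, zeta_nat_eq_tsum_of_gt_one (by omega)]
  have hc : ∀ m : ℕ, (1 / (m : ℂ) ^ (n + 2)) = ((1 / (m : ℝ) ^ (n + 2) : ℝ) : ℂ) := by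
    intro m; push_cast; ring
  rw [tsum_congr hc, ← Complex.ofReal_tsum, real_split n]
  push_cast
  ring

lemma inner_log (m : ℕ) :
    HasSum (fun n : ℕ ↦ (1 / (n + 2 : ℝ)) * (1 / (m + 2 : ℝ)) ^ (n + 2))
      (Real.log (m + 2) - Real.log (m + 1) - 1 / (m + 2)) := by
  set x : ℝ := 1 / (m + 2) with hxdef
  have hm : (0:ℝ) ≤ (m:ℝ) := Nat.cast_nonneg m
  have hx0 : 0 < x := by positivity
  have hxlt : |x| < 1 := by
    rw [abs_of_pos hx0]
    rw [hxdef, div_lt_one (by linarith)]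
    linarith
  have H := Real.hasSum_pow_div_log_of_abs_lt_one hxlt
  have H2 : HasSum (fun n : ℕ ↦ x ^ (n + 1 + 1) / (↑(n + 1) + 1)) (-Real.log (1 - x) - x) := by
    refine (hasSum_nat_add_iff (f := fun n : ℕ ↦ x ^ (n + 1) / (n + 1)) 1).2 ?_
    convert H using 1
    · rfl
    simp
  have hval : -Real.log (1 - x) - x = Real.log (m + 2) - Real.log (m + 1) - 1 / (m + 2) := by
    have h1x : 1 - x = (m + 1) / (m + 2) := by
      rw [hxdef]; field_simp; ring
    rw [h1x, Real.log_div (by linarith) (by linarith), hxdef]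
    ring
  rw [← hval]
  refine H2.congr_fun fun n ↦ ?_
  push_cast
  ring

lemma key_real : ∑' n : ℕ, (1 / (n + 2 : ℝ)) * zr n = 1 - Real.eulerMascheroniConstant := by
  set f : ℕ → ℕ → ℝ := fun n m ↦ (1 / (n + 2 : ℝ)) * (1 / (m + 2 : ℝ)) ^ (n + 2) with hf
  have h1 : ∀ n, Summable (f n) := fun n ↦ (zr_summable n).mul_left _
  have hrow : ∀ n, ∑' m, f n m = (1 / (n + 2 : ℝ)) * zr n := fun n ↦ tsum_mul_left
  have hsums : Summable (fun n ↦ ∑' m, f n m) := by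
    simp only [hrow]
    refine Summable.of_nonneg_of_le (fun n ↦ mul_nonneg (by positivity) (zr_nonneg n)) (fun n ↦ ?_)
      (((summable_geometric_of_lt_one (r := (1/2:ℝ)) (by norm_num) (by norm_num)).mul_right (zr 0)))
    have hn : (0:ℝ) ≤ (n:ℝ) := Nat.cast_nonneg n
    calc (1 / (n + 2 : ℝ)) * zr n ≤ 1 * zr n := by
          refine mul_le_mul_of_nonneg_right ?_ (zr_nonneg n)
          rw [div_le_one (by linarith)]; linarith
      _ = zr n := one_mul _
      _ ≤ (1/2:ℝ) ^ n * zr 0 := zr_le n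
  have huncurry : Summable (Function.uncurry f) := by
    rw [summable_prod_of_nonneg (f := Function.uncurry f) (fun p ↦ show (0:ℝ) ≤ (1 / (p.1 + 2 : ℝ)) * (1 / (p.2 + 2 : ℝ)) ^ (p.1 + 2) by positivity)]
    exact ⟨h1, hsums⟩
  have hcol : ∀ m, Summable fun n ↦ f n m := fun m ↦ (inner_log m).summable
  calc ∑' n : ℕ, (1 / (n + 2 : ℝ)) * zr n = ∑' n, ∑' m, f n m := by
        exact tsum_congr fun n ↦ (hrow n).symm
    _ = ∑' m, ∑' n, f n m := (Summable.tsum_comm' huncurry h1 hcol).symm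
    _ = ∑' m : ℕ, (Real.log (m + 2) - Real.log (m + 1) - 1 / (m + 2)) := by
        exact tsum_congr fun m ↦ (inner_log m).tsum_eq
    _ = ∑' m : ℕ, ZetaAsymptotics.term (m + 1) 1 := by
        refine tsum_congr fun m ↦ ?_
        rw [ZetaAsymptotics.term_one (by omega : 0 < m + 1)]
        push_cast
        ring_nf
    _ = 1 - Real.eulerMascheroniConstant := ZetaAsymptotics.term_tsum_one.tsum_eq

lemma harmonic_le_rat (k : ℕ) : (harmonic k : ℚ) ≤ k := by
  induction k with
  | zero => simp
  | succ n ih =>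
    rw [harmonic_succ]
    push_cast
    have h1 : ((n:ℚ) + 1)⁻¹ ≤ 1 := by
      rw [← one_div, div_le_one (by positivity)]
      have : (0:ℚ) ≤ (n:ℚ) := Nat.cast_nonneg n
      linarith
    linarith

lemma summable_h (k : ℕ) (hk : ∀ n : ℕ, (harmonic (n + k) : ℝ) ≤ (n : ℝ) + 2) :
    Summable (fun n : ℕ ↦ (harmonic (n + k) : ℂ) * (riemannZeta ((n : ℂ) + 2) - 1)) := by
  refine Summable.of_norm ?_
  have hnn : ∀ j : ℕ, (0:ℝ) ≤ (harmonic j : ℝ) := by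
    intro j
    rcases Nat.eq_zero_or_pos j with h | h
    · simp [h]
    · exact_mod_cast (harmonic_pos (Nat.pos_iff_ne_zero.mp h)).le
  have hb : ∀ n : ℕ, ‖(harmonic (n + k) : ℂ) * (riemannZeta ((n : ℂ) + 2) - 1)‖ ≤
      ((n : ℝ) + 2) * ((1/2 : ℝ) ^ n * zr 0) := by
    intro n
    rw [zeta_eq n]
    have h2 : (harmonic (n + k) : ℂ) * ((zr n : ℝ) : ℂ)
        = (((harmonic (n + k) : ℝ) * zr n : ℝ) : ℂ) := by push_cast; ring
    rw [h2, Complex.norm_real, Real.norm_eq_abs,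
      abs_of_nonneg (mul_nonneg (hnn _) (zr_nonneg n))]
    exact mul_le_mul (hk n) (zr_le n) (zr_nonneg n) (by positivity)
  refine Summable.of_nonneg_of_le (fun n ↦ norm_nonneg _) hb ?_
  have hs : Summable (fun n : ℕ ↦ ((n : ℝ) + 2) * (1/2 : ℝ) ^ n) := by
    have h1 : Summable (fun n : ℕ ↦ (n : ℝ) ^ 1 * (1/2 : ℝ) ^ n) :=
      summable_pow_mul_geometric_of_norm_lt_one 1 (by rw [Real.norm_eq_abs, abs_of_nonneg (by norm_num : (0:ℝ) ≤ 1/2)]; norm_num)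
    have h2 : Summable (fun n : ℕ ↦ (2 : ℝ) * (1/2 : ℝ) ^ n) :=
      (summable_geometric_of_lt_one (by norm_num) (by norm_num)).mul_left 2
    exact (h1.add h2).congr fun n ↦ by ring
  exact (hs.mul_right (zr 0)).congr fun n ↦ by ring

theorem harmonic_zeta_shift :
    ∑' n : ℕ, (harmonic (n + 2) : ℂ) * (riemannZeta ((n : ℂ) + 2) - 1) =
      1 - (Real.eulerMascheroniConstant : ℂ) +
        ∑' n : ℕ, (harmonic (n + 1) : ℂ) * (riemannZeta ((n : ℂ) + 2) - 1) := by
  have hA := summable_h 2 (fun n ↦ by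
    have := harmonic_le_rat (n + 2)
    have h2 : (harmonic (n + 2) : ℝ) ≤ ((n + 2 : ℕ) : ℝ) := by exact_mod_cast this
    push_cast at h2
    linarith)
  have hB := summable_h 1 (fun n ↦ by
    have := harmonic_le_rat (n + 1)
    have h2 : (harmonic (n + 1) : ℝ) ≤ ((n + 1 : ℕ) : ℝ) := by exact_mod_cast this
    push_cast at h2
    linarith)
  rw [← sub_eq_iff_eq_add, ← Summable.tsum_sub hA hB,
    show 1 - (Real.eulerMascheroniConstant : ℂ) = ((1 - Real.eulerMascheroniConstant : ℝ) : ℂ)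
      by push_cast; ring, ← key_real, Complex.ofReal_tsum]
  refine tsum_congr fun n ↦ ?_
  rw [zeta_eq n]
  have hh : (harmonic (n + 2) : ℚ) = harmonic (n + 1) + 1 / (n + 2) := by
    rw [show n + 2 = (n + 1) + 1 from rfl, harmonic_succ (n + 1)]
    push_cast
    ring
  have hhc := congrArg (fun q : ℚ ↦ (q : ℂ)) hh
  push_cast at hhc
  rw [hhc]
  push_cast
  ring
end

section
/- For every integer n ≥ 2, ∑_{k=2}^∞ 1/(k^n (k−1)) = n − ζ(2) − ζ(3) − ⋯ − ζ(n). -/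
open Complex Finset Filter Topology

private lemma norm_aux (k n : ℕ) :
    ‖1 / (((k : ℂ) + 2) ^ n * ((k : ℂ) + 1))‖ =
      1 / (((k : ℝ) + 2) ^ n * ((k : ℝ) + 1)) := by
  have h2 : ((k : ℂ) + 2) = ((k + 2 : ℕ) : ℂ) := by push_cast; ring
  have h1 : ((k : ℂ) + 1) = ((k + 1 : ℕ) : ℂ) := by push_cast; ring
  rw [h1, h2, norm_div, norm_mul, norm_pow, norm_one, Complex.norm_natCast,
    Complex.norm_natCast]
  push_cast; ring_nf

private lemma summable_real_aux {n : ℕ} (hn : 1 ≤ n) :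
    Summable (fun k : ℕ => 1 / (((k : ℝ) + 2) ^ n * ((k : ℝ) + 1))) := by
  have h : Summable (fun k : ℕ => 1 / ((k : ℝ) + 1) ^ 2) := by
    have := (summable_nat_add_iff (f := fun k : ℕ => 1 / (k : ℝ) ^ 2) 1).mpr
      (Real.summable_one_div_nat_pow.mpr one_lt_two)
    simpa using this
  refine h.of_nonneg_of_le (fun k => by positivity) (fun k => ?_)
  have hk : (0 : ℝ) ≤ (k : ℝ) := Nat.cast_nonneg k
  apply one_div_le_one_div_of_le (by positivity)
  have h1 : ((k : ℝ) + 1) ≤ ((k : ℝ) + 2) ^ n := by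
    calc ((k : ℝ) + 1) ≤ (k : ℝ) + 2 := by linarith
      _ = ((k : ℝ) + 2) ^ 1 := (pow_one _).symm
      _ ≤ ((k : ℝ) + 2) ^ n := pow_le_pow_right₀ (by linarith) hn
  nlinarith [h1, hk]

private lemma summable_aux {n : ℕ} (hn : 1 ≤ n) :
    Summable (fun k : ℕ => 1 / (((k : ℂ) + 2) ^ n * ((k : ℂ) + 1))) := by
  apply Summable.of_norm
  simpa only [norm_aux] using summable_real_aux hn

private lemma summable_pow_aux {j : ℕ} (hj : 2 ≤ j) :
    Summable (fun k : ℕ => 1 / ((k : ℂ) + 2) ^ j) := by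
  apply Summable.of_norm
  have h : Summable (fun k : ℕ => 1 / ((k : ℝ) + 2) ^ j) := by
    have := (summable_nat_add_iff (f := fun k : ℕ => 1 / (k : ℝ) ^ j) 2).mpr
      (Real.summable_one_div_nat_pow.mpr (by omega))
    simpa using this
  refine h.congr fun k => ?_
  have h2 : ((k : ℂ) + 2) = ((k + 2 : ℕ) : ℂ) := by push_cast; ring
  rw [h2, norm_div, norm_pow, norm_one, Complex.norm_natCast]
  push_cast; ring

private lemma summable_nat_pow_aux {j : ℕ} (hj : 2 ≤ j) :
    Summable (fun k : ℕ => 1 / (k : ℂ) ^ j) := by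
  apply Summable.of_norm
  refine (Real.summable_one_div_nat_pow.mpr (by omega : 1 < j)).congr fun k => ?_
  rw [norm_div, norm_pow, norm_one, Complex.norm_natCast]

private lemma tsum_shift_zeta {j : ℕ} (hj : 2 ≤ j) :
    ∑' k : ℕ, 1 / ((k : ℂ) + 2) ^ j = riemannZeta j - 1 := by
  have hs := summable_nat_pow_aux hj
  rw [zeta_nat_eq_tsum_of_gt_one (by omega : 1 < j), hs.tsum_eq_zero_add,
    Summable.tsum_eq_zero_add ((summable_nat_add_iff 1).mpr hs)]
  push_cast
  simp [zero_pow (show j ≠ 0 by omega)]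
  exact tsum_congr fun k => by ring_nf

private lemma base_case :
    ∑' k : ℕ, 1 / (((k : ℂ) + 2) ^ 1 * ((k : ℂ) + 1)) = 1 := by
  have hnorm : Summable fun k : ℕ => ‖1 / (((k : ℂ) + 2) ^ 1 * ((k : ℂ) + 1))‖ := by
    simpa only [norm_aux] using summable_real_aux (le_refl 1)
  refine HasSum.tsum_eq ?_
  rw [hasSum_iff_tendsto_nat_of_summable_norm hnorm]
  have key : ∀ N : ℕ, ∑ k ∈ Finset.range N, 1 / (((k : ℂ) + 2) ^ 1 * ((k : ℂ) + 1))
      = 1 - 1 / ((N : ℂ) + 1) := by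
    intro N
    calc ∑ k ∈ Finset.range N, 1 / (((k : ℂ) + 2) ^ 1 * ((k : ℂ) + 1))
        = ∑ k ∈ Finset.range N, (1 / ((k : ℂ) + 1) - 1 / (((k + 1 : ℕ) : ℂ) + 1)) :=
          Finset.sum_congr rfl fun k _ => ?_
      _ = 1 / (((0 : ℕ) : ℂ) + 1) - 1 / ((N : ℂ) + 1) :=
          Finset.sum_range_sub' (f := fun k : ℕ => 1 / ((k : ℂ) + 1)) N
      _ = 1 - 1 / ((N : ℂ) + 1) := by norm_num
    have h1 : ((k : ℂ) + 1) ≠ 0 := by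
      intro hc
      have := congrArg Complex.re hc
      simp at this
      linarith [Nat.cast_nonneg (α := ℝ) k]
    have h2 : ((k : ℂ) + 2) ≠ 0 := by
      intro hc
      have := congrArg Complex.re hc
      simp at this
      linarith [Nat.cast_nonneg (α := ℝ) k]
    have h3 : ((k : ℂ) + 1 + 1) ≠ 0 := fun hc => h2 (by linear_combination hc)
    push_cast
    rw [pow_one]
    field_simp
    ring
  simp only [key]
  have hlim : Tendsto (fun N : ℕ => 1 / ((N : ℂ) + 1)) atTop (𝓝 0) := by
    have h := tendsto_one_div_add_atTop_nhds_zero_nat (𝕜 := ℝ)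
    have h2 : Tendsto (fun N : ℕ => Complex.ofReal (1 / ((N : ℝ) + 1))) atTop (𝓝 0) := by
      rw [show (0 : ℂ) = Complex.ofReal 0 by simp]
      exact (Complex.continuous_ofReal.tendsto 0).comp h
    refine h2.congr fun N => ?_
    push_cast; ring
  simpa using (tendsto_const_nhds (x := (1 : ℂ))).sub hlim

private lemma main_aux (n : ℕ) (hn : 1 ≤ n) :
    ∑' k : ℕ, 1 / (((k : ℂ) + 2) ^ n * ((k : ℂ) + 1)) =
      (n : ℂ) - ∑ j ∈ Finset.Icc 2 n, riemannZeta (j : ℂ) := by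
  induction n, hn using Nat.le_induction with
  | base =>
      rw [base_case]
      norm_num
  | succ n hn ih =>
      have hstep : ∀ k : ℕ, 1 / (((k : ℂ) + 2) ^ (n + 1) * ((k : ℂ) + 1)) =
          1 / (((k : ℂ) + 2) ^ n * ((k : ℂ) + 1)) - 1 / ((k : ℂ) + 2) ^ (n + 1) := by
        intro k
        have h1 : ((k : ℂ) + 1) ≠ 0 := by
          intro hc
          have := congrArg Complex.re hc
          simp at this
          linarith [Nat.cast_nonneg (α := ℝ) k]
        have h2 : ((k : ℂ) + 2) ≠ 0 := by
          intro hc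
          have := congrArg Complex.re hc
          simp at this
          linarith [Nat.cast_nonneg (α := ℝ) k]
        field_simp
        ring
      rw [tsum_congr hstep,
        Summable.tsum_sub (summable_aux hn) (summable_pow_aux (by omega)), ih,
        tsum_shift_zeta (by omega : 2 ≤ n + 1),
        Finset.sum_Icc_succ_top (by omega : 2 ≤ n + 1)]
      push_cast
      ring

theorem tsum_inv_pow_mul_pred (n : ℕ) (hn : 2 ≤ n) :
    ∑' k : ℕ, 1 / (((k : ℂ) + 2) ^ n * ((k : ℂ) + 1)) =
      (n : ℂ) - ∑ j ∈ Finset.Icc 2 n, riemannZeta (j : ℂ) := by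
  exact main_aux n (by omega)
end

section
/- ∑_{n=1}^∞ (1/n)·(n − ζ(2) − ζ(3) − ⋯ − ζ(n)) = ∑_{n=1}^∞ (1/n)·ln(1 + 1/n), where the n = 1 term on the left is 1 (empty zeta sum). -/
open Real Filter Finset

noncomputable def G (N : ℕ) : ℝ := ∑' k : ℕ, 1 / (((k : ℝ) + 1) * ((k : ℝ) + 2) ^ N)

lemma sq_summable : Summable (fun k : ℕ => 1 / ((k : ℝ) + 1) ^ 2) := by
  have h : Summable (fun n : ℕ => 1 / (n : ℝ) ^ 2) := summable_one_div_nat_pow.mpr one_lt_two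
  have := (summable_nat_add_iff (f := fun n : ℕ => 1 / (n : ℝ) ^ 2) 1).mpr h
  simpa using this

lemma Gsummable (N : ℕ) (hN : 1 ≤ N) :
    Summable (fun k : ℕ => 1 / (((k : ℝ) + 1) * ((k : ℝ) + 2) ^ N)) := by
  refine Summable.of_nonneg_of_le (fun k => by positivity) (fun k => ?_) sq_summable
  apply one_div_le_one_div_of_le (by positivity)
  have h1 : ((k : ℝ) + 1) ≤ ((k : ℝ) + 2) ^ N := by
    calc ((k : ℝ) + 1) ≤ (k : ℝ) + 2 := by linarith
    _ ≤ ((k : ℝ) + 2) ^ N :=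
      le_self_pow₀ (by linarith [k.cast_nonneg (α := ℝ)]) (by omega)
  calc ((k : ℝ) + 1) ^ 2 = ((k : ℝ) + 1) * ((k : ℝ) + 1) := sq _
  _ ≤ ((k : ℝ) + 1) * ((k : ℝ) + 2) ^ N := by
      exact mul_le_mul_of_nonneg_left h1 (by positivity)

lemma hasSum_base : HasSum (fun k : ℕ => 1 / (((k : ℝ) + 1) * ((k : ℝ) + 2))) 1 := by
  rw [hasSum_iff_tendsto_nat_of_nonneg (fun k => by positivity)]
  have key : ∀ n : ℕ, ∑ i ∈ range n, 1 / (((i : ℝ) + 1) * ((i : ℝ) + 2)) = 1 - 1 / ((n : ℝ) + 1) := by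
    intro n
    induction n with
    | zero => simp
    | succ n ih =>
      rw [sum_range_succ, ih]
      push_cast
      have h1 : ((n : ℝ) + 1) ≠ 0 := by positivity
      have h2 : ((n : ℝ) + 2) ≠ 0 := by positivity
      field_simp
      ring
  simp only [key]
  have := tendsto_one_div_add_atTop_nhds_zero_nat (𝕜 := ℝ)
  simpa using tendsto_const_nhds.sub this

lemma G_one : G 1 = 1 := by
  have : G 1 = ∑' k : ℕ, 1 / (((k : ℝ) + 1) * ((k : ℝ) + 2)) := by
    unfold G; simp [pow_one]
  rw [this, hasSum_base.tsum_eq]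

lemma tail_summable (N : ℕ) (hN : 2 ≤ N) :
    Summable (fun k : ℕ => 1 / ((k : ℝ) + 2) ^ N) := by
  refine Summable.of_nonneg_of_le (fun k => by positivity) (fun k => ?_) sq_summable
  apply one_div_le_one_div_of_le (by positivity)
  calc ((k : ℝ) + 1) ^ 2 ≤ ((k : ℝ) + 2) ^ 2 := by gcongr <;> linarith
  _ ≤ ((k : ℝ) + 2) ^ N := pow_le_pow_right₀ (by linarith [k.cast_nonneg (α := ℝ)]) hN

lemma zeta_eq_s13 (m : ℕ) :
    riemannZeta ((m + 2 : ℕ) : ℂ) = 1 + ((∑' k : ℕ, 1 / ((k : ℝ) + 2) ^ (m + 2) : ℝ) : ℂ) := by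
  rw [zeta_nat_eq_tsum_of_gt_one (by omega)]
  have hsum : Summable (fun n : ℕ => 1 / (n : ℂ) ^ (m + 2)) := by
    apply Summable.of_norm
    have : Summable (fun n : ℕ => 1 / (n : ℝ) ^ (m + 2)) :=
      summable_one_div_nat_pow.mpr (by omega)
    refine this.congr fun n => ?_
    simp [norm_div, norm_pow]
  have hsumC1 : Summable (fun n : ℕ => 1 / ((n : ℂ) + 1) ^ (m + 2)) := by
    have := hsum.comp_injective (add_left_injective 1)
    refine this.congr fun n => ?_
    simp only [Function.comp]
    push_cast
    ring
  rw [Summable.tsum_eq_zero_add hsum]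
  push_cast
  rw [Summable.tsum_eq_zero_add hsumC1]
  push_cast
  have ht : ∑' (b : ℕ), 1 / ((b : ℂ) + 1 + 1) ^ (m + 2) =
      ∑' (a : ℕ), 1 / ((a : ℂ) + 2) ^ (m + 2) := by
    congr 1
    funext b
    norm_num
    ring_nf
  rw [ht, zero_pow (by omega : m + 2 ≠ 0)]
  norm_num

lemma G_sub (N : ℕ) (hN : 1 ≤ N) :
    G N - G (N + 1) = ∑' k : ℕ, 1 / ((k : ℝ) + 2) ^ (N + 1) := by
  unfold G
  rw [← Summable.tsum_sub (Gsummable N hN) (Gsummable (N + 1) (by omega))]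
  congr 1
  funext k
  have h1 : ((k : ℝ) + 1) ≠ 0 := by positivity
  have h2 : ((k : ℝ) + 2) ≠ 0 := by positivity
  field_simp
  ring

lemma key (n : ℕ) :
    ((n : ℂ) + 1) - ∑ j ∈ Finset.Icc 2 (n + 1), riemannZeta (j : ℂ) = ((G (n + 1) : ℝ) : ℂ) := by
  induction n with
  | zero =>
    rw [Finset.Icc_eq_empty (by omega)]
    simp [G_one]
  | succ n ih =>
    have hs : ∑ j ∈ Finset.Icc 2 (n + 1 + 1), riemannZeta (j : ℂ) =
        ∑ j ∈ Finset.Icc 2 (n + 1), riemannZeta (j : ℂ) + riemannZeta ((n + 2 : ℕ) : ℂ) := by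
      rw [Finset.sum_Icc_succ_top (by omega)]
    rw [hs, zeta_eq_s13 n]
    have hr : G (n + 2) = G (n + 1) - ∑' k : ℕ, 1 / ((k : ℝ) + 2) ^ (n + 2) := by
      linarith [G_sub (n + 1) (by omega)]
    have hG : ((G (n + 2) : ℝ) : ℂ) =
        ((G (n + 1) : ℝ) : ℂ) - ((∑' k : ℕ, 1 / ((k : ℝ) + 2) ^ (n + 2) : ℝ) : ℂ) := by
      rw [hr, Complex.ofReal_sub]
    have : ((n + 1 : ℕ) : ℂ) + 1 - (∑ j ∈ Finset.Icc 2 (n + 1), riemannZeta (j : ℂ) +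
        (1 + ((∑' k : ℕ, 1 / ((k : ℝ) + 2) ^ (n + 2) : ℝ) : ℂ))) =
        (((n : ℂ) + 1) - ∑ j ∈ Finset.Icc 2 (n + 1), riemannZeta (j : ℂ)) -
          ((∑' k : ℕ, 1 / ((k : ℝ) + 2) ^ (n + 2) : ℝ) : ℂ) := by
      push_cast
      ring
    rw [this, ih, hG]

lemma G_nonneg (N : ℕ) : 0 ≤ G N := tsum_nonneg fun k => by positivity

lemma G_le (n : ℕ) : G (n + 1) ≤ (1 / 2 : ℝ) ^ n := by
  have h1 : G (n + 1) ≤ ∑' k : ℕ, (1 / 2 : ℝ) ^ n * (1 / (((k : ℝ) + 1) * ((k : ℝ) + 2))) := by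
    refine Summable.tsum_le_tsum (fun k => ?_) (Gsummable (n + 1) (by omega))
      (hasSum_base.summable.mul_left _)
    have hx : (2 : ℝ) ^ n ≤ ((k : ℝ) + 2) ^ n :=
      pow_le_pow_left₀ (by norm_num) (by linarith [k.cast_nonneg (α := ℝ)]) n
    have e1 : 1 / (((k : ℝ) + 1) * ((k : ℝ) + 2) ^ (n + 1)) =
        (1 / ((k : ℝ) + 2) ^ n) * (1 / (((k : ℝ) + 1) * ((k : ℝ) + 2))) := by
      rw [pow_succ]
      have h1 : ((k : ℝ) + 1) ≠ 0 := by positivity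
      have h2 : ((k : ℝ) + 2) ≠ 0 := by positivity
      field_simp
    rw [e1, div_pow, one_pow]
    have hle : (1 : ℝ) / ((k : ℝ) + 2) ^ n ≤ 1 / 2 ^ n :=
      one_div_le_one_div_of_le (by positivity) hx
    exact mul_le_mul_of_nonneg_right hle (by positivity)
  calc G (n + 1) ≤ ∑' k : ℕ, (1 / 2 : ℝ) ^ n * (1 / (((k : ℝ) + 1) * ((k : ℝ) + 2))) := h1
  _ = (1 / 2 : ℝ) ^ n := by rw [tsum_mul_left, hasSum_base.tsum_eq, mul_one]

lemma rowsum_summable : Summable (fun n : ℕ => 1 / ((n : ℝ) + 1) * G (n + 1)) := by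
  refine Summable.of_nonneg_of_le (fun n => mul_nonneg (by positivity) (G_nonneg _))
    (fun n => ?_) (summable_geometric_of_lt_one (r := (1/2 : ℝ)) (by norm_num) (by norm_num))
  calc 1 / ((n : ℝ) + 1) * G (n + 1) ≤ 1 * G (n + 1) := by
        apply mul_le_mul_of_nonneg_right _ (G_nonneg _)
        rw [div_le_one (by positivity)]
        linarith [n.cast_nonneg (α := ℝ)]
  _ = G (n + 1) := one_mul _
  _ ≤ (1 / 2 : ℝ) ^ n := G_le n

noncomputable def F (n k : ℕ) : ℝ :=
  1 / ((n : ℝ) + 1) * (1 / (((k : ℝ) + 1) * ((k : ℝ) + 2) ^ (n + 1)))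

lemma row_summable (n : ℕ) : Summable (F n) :=
  (Gsummable (n + 1) (by omega)).mul_left _

lemma row_tsum (n : ℕ) : ∑' k : ℕ, F n k = 1 / ((n : ℝ) + 1) * G (n + 1) := by
  unfold F G
  rw [tsum_mul_left]

lemma F_summable : Summable (Function.uncurry F) := by
  rw [summable_prod_of_nonneg (fun p => by unfold Function.uncurry F; positivity)]
  refine ⟨fun n => row_summable n, ?_⟩
  simp only [Function.uncurry_apply_pair, row_tsum]
  exact rowsum_summable

lemma log_sum (k : ℕ) :
    HasSum (fun n : ℕ => F n k) (1 / ((k : ℝ) + 1) * Real.log (1 + 1 / ((k : ℝ) + 1))) := by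
  have hx : |1 / ((k : ℝ) + 2)| < 1 := by
    rw [abs_of_pos (by positivity), div_lt_one (by positivity)]
    linarith [k.cast_nonneg (α := ℝ)]
  have h := (hasSum_pow_div_log_of_abs_lt_one hx).mul_left (1 / ((k : ℝ) + 1))
  have h1 : ((k : ℝ) + 1) ≠ 0 := by positivity
  have h2 : ((k : ℝ) + 2) ≠ 0 := by positivity
  have hlog : -Real.log (1 - 1 / ((k : ℝ) + 2)) = Real.log (1 + 1 / ((k : ℝ) + 1)) := by
    have e1 : (1 : ℝ) - 1 / ((k : ℝ) + 2) = ((k : ℝ) + 1) / ((k : ℝ) + 2) := by field_simp; ring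
    have e2 : (1 : ℝ) + 1 / ((k : ℝ) + 1) = ((k : ℝ) + 2) / ((k : ℝ) + 1) := by field_simp; ring
    rw [e1, e2, ← Real.log_inv, inv_div]
  rw [hlog] at h
  refine h.congr_fun fun n => ?_
  unfold F
  rw [div_pow, one_pow]
  field_simp

theorem series_n_minus_zeta_sums :
    ∑' n : ℕ, (1 / ((n : ℂ) + 1)) *
        (((n : ℂ) + 1) - ∑ j ∈ Finset.Icc 2 (n + 1), riemannZeta (j : ℂ)) =
      ((∑' n : ℕ, (1 / ((n : ℝ) + 1)) * Real.log (1 + 1 / ((n : ℝ) + 1)) : ℝ) : ℂ) := by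
  have step1 : ∑' n : ℕ, (1 / ((n : ℂ) + 1)) *
      (((n : ℂ) + 1) - ∑ j ∈ Finset.Icc 2 (n + 1), riemannZeta (j : ℂ)) =
      ((∑' n : ℕ, 1 / ((n : ℝ) + 1) * G (n + 1) : ℝ) : ℂ) := by
    rw [Complex.ofReal_tsum]
    congr 1
    funext n
    rw [key n]
    push_cast
    ring
  rw [step1]
  congr 1
  have step2 : ∑' n : ℕ, 1 / ((n : ℝ) + 1) * G (n + 1) = ∑' n : ℕ, ∑' k : ℕ, F n k := by
    simp only [row_tsum]
  rw [step2, ← Summable.tsum_comm (f := F) F_summable]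
  congr 1
  funext k
  exact (log_sum k).tsum_eq
end

section
/- ∫_0^1 ((1−u) ln(1−u))/(u ln u) du = ∑_{n=1}^∞ (1/n)·ln(1 + 1/n). -/
open Real MeasureTheory Set

noncomputable def Fn (n : ℕ) (x : ℝ) : ℝ :=
  (x ^ (n + 1) - x ^ n) / (((n : ℝ) + 1) * Real.log x)

lemma integral_exp_mul' {c : ℝ} (hc : c ≠ 0) (a b : ℝ) :
    ∫ s in a..b, Real.exp (c * s) = (Real.exp (c * b) - Real.exp (c * a)) / c := by
  have D : ∀ y : ℝ, HasDerivAt (fun y : ℝ => Real.exp (c * y) / c) (Real.exp (c * y)) y := by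
    intro y
    have h1 : HasDerivAt (fun y : ℝ => c * y) c y := by
      simpa using (hasDerivAt_id y).const_mul c
    have h2 := ((Real.hasDerivAt_exp (c * y)).comp y h1).div_const c
    simpa [mul_div_cancel_right₀ _ hc] using h2
  rw [intervalIntegral.integral_eq_sub_of_hasDerivAt (fun y _ => D y)]
  · ring
  · exact (Real.continuous_exp.comp (continuous_const.mul continuous_id)).intervalIntegrable a b

lemma integral_rpow_exponent {x : ℝ} (hx : 0 < x) (hlog : Real.log x ≠ 0) (a b : ℝ) :
    ∫ s in a..b, x ^ s = (x ^ b - x ^ a) / Real.log x := by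
  simp_rw [Real.rpow_def_of_pos hx]
  exact integral_exp_mul' hlog a b

lemma key_integrable (n : ℕ) :
    Integrable (fun p : ℝ × ℝ => p.1 ^ p.2)
      ((volume.restrict (Ioo (0:ℝ) 1)).prod (volume.restrict (Ioc (n:ℝ) (n+1)))) := by
  set μ := volume.restrict (Ioo (0:ℝ) 1)
  set ν := volume.restrict (Ioc (n:ℝ) (n+1))
  have hprod : μ.prod ν = (volume.prod volume).restrict ((Ioo (0:ℝ) 1) ×ˢ (Ioc (n:ℝ) (n+1))) :=
    Measure.prod_restrict _ _
  have hms : MeasurableSet ((Ioo (0:ℝ) 1) ×ˢ (Ioc (n:ℝ) (n+1))) :=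
    measurableSet_Ioo.prod measurableSet_Ioc
  have hmem : ∀ᵐ p ∂(μ.prod ν), p ∈ (Ioo (0:ℝ) 1) ×ˢ (Ioc (n:ℝ) (n+1)) := by
    rw [hprod]; exact ae_restrict_mem hms
  haveI : IsFiniteMeasure μ := by
    constructor
    simp [μ, Measure.restrict_apply_univ, Real.volume_Ioo]
  haveI : IsFiniteMeasure ν := by
    constructor
    simp [ν, Measure.restrict_apply_univ, Real.volume_Ioc]
  constructor
  · have hmeas : AEStronglyMeasurable (fun p : ℝ × ℝ => Real.exp (Real.log p.1 * p.2))
        (μ.prod ν) :=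
      (Real.measurable_exp.comp ((Real.measurable_log.comp measurable_fst).mul
        measurable_snd)).aestronglyMeasurable
    refine hmeas.congr ?_
    filter_upwards [hmem] with p hp
    exact (Real.rpow_def_of_pos hp.1.1 p.2).symm
  · refine HasFiniteIntegral.of_bounded (C := 1) ?_
    filter_upwards [hmem] with p hp
    have h1 : (0:ℝ) < p.1 := hp.1.1
    have h2 : p.1 ≤ 1 := hp.1.2.le
    have h3 : (0:ℝ) ≤ p.2 := le_trans (Nat.cast_nonneg n) hp.2.1.le
    rw [Real.norm_of_nonneg (Real.rpow_nonneg h1.le _)]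
    exact Real.rpow_le_one h1.le h2 h3

lemma key_inner (n : ℕ) {x : ℝ} (hx : x ∈ Ioo (0:ℝ) 1) :
    ∫ s in Ioc (n:ℝ) (n+1), x ^ s = (x ^ (n+1) - x ^ n) / Real.log x := by
  have hlog : Real.log x ≠ 0 := (Real.log_neg hx.1 hx.2).ne
  have hle : (n:ℝ) ≤ (n:ℝ) + 1 := by linarith
  rw [← intervalIntegral.integral_of_le hle, integral_rpow_exponent hx.1 hlog]
  rw [show ((n:ℝ) + 1) = ((n + 1 : ℕ) : ℝ) by push_cast; ring,
    Real.rpow_natCast, Real.rpow_natCast]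

lemma key_s14 (n : ℕ) :
    ∫ x in Ioo (0:ℝ) 1, (x ^ (n+1) - x ^ n) / Real.log x
      = Real.log (1 + 1 / ((n:ℝ) + 1)) := by
  have hswap := MeasureTheory.integral_integral_swap
    (f := fun (x s : ℝ) => x ^ s) (key_integrable n)
  have h1 : ∫ x in Ioo (0:ℝ) 1, (x ^ (n+1) - x ^ n) / Real.log x
      = ∫ x in Ioo (0:ℝ) 1, ∫ s in Ioc (n:ℝ) (n+1), x ^ s := by
    refine setIntegral_congr_fun measurableSet_Ioo fun x hx => ?_
    exact (key_inner n hx).symm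
  rw [h1, hswap]
  have h2 : ∫ s in Ioc (n:ℝ) (n+1), ∫ x in Ioo (0:ℝ) 1, x ^ s
      = ∫ s in Ioc (n:ℝ) (n+1), 1/(s+1) := by
    refine setIntegral_congr_fun measurableSet_Ioc fun s hs => ?_
    have hs0 : (0:ℝ) ≤ s := le_trans (Nat.cast_nonneg n) hs.1.le
    rw [← integral_Ioc_eq_integral_Ioo, ← intervalIntegral.integral_of_le zero_le_one,
      integral_rpow (Or.inl (by linarith : (-1:ℝ) < s))]
    rw [Real.one_rpow, Real.zero_rpow (by linarith : s + 1 ≠ 0)]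
    ring
  rw [h2]
  have hle : (n:ℝ) ≤ (n:ℝ) + 1 := by linarith
  rw [← intervalIntegral.integral_of_le hle]
  have h3 : ∫ s in (n:ℝ)..((n:ℝ)+1), 1/(s+1)
      = ∫ t in ((n:ℝ)+1)..((n:ℝ)+1+1), 1/t := by
    simpa using intervalIntegral.integral_comp_add_right (a := (n:ℝ)) (b := (n:ℝ)+1)
      (fun t : ℝ => 1/t) 1
  rw [h3, integral_one_div]
  · congr 1
    have hpos : (0:ℝ) < (n:ℝ) + 1 := by positivity
    field_simp
  · intro h
    rw [Set.mem_uIcc] at h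
    have hpos : (0:ℝ) < (n:ℝ) + 1 := by positivity
    rcases h with ⟨h1, _⟩ | ⟨_, h2⟩ <;> linarith

lemma Fn_nonneg {n : ℕ} {x : ℝ} (hx : x ∈ Ioo (0:ℝ) 1) : 0 ≤ Fn n x := by
  have hlog : Real.log x < 0 := Real.log_neg hx.1 hx.2
  have hpow : x ^ (n+1) ≤ x ^ n :=
    pow_le_pow_of_le_one hx.1.le hx.2.le (Nat.le_succ n)
  have hn : (0:ℝ) < (n:ℝ) + 1 := by positivity
  rw [Fn, ← neg_div_neg_eq]
  exact div_nonneg (by linarith) (by nlinarith)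

lemma Fn_integrable (n : ℕ) : Integrable (Fn n) (volume.restrict (Ioo (0:ℝ) 1)) := by
  have h := (key_integrable n).integral_prod_left
  refine ((h.const_mul (((n:ℝ)+1)⁻¹)).congr ?_)
  filter_upwards [ae_restrict_mem measurableSet_Ioo] with x hx
  rw [key_inner n hx, Fn]
  have hlog : Real.log x ≠ 0 := (Real.log_neg hx.1 hx.2).ne
  have hn : ((n:ℝ) + 1) ≠ 0 := by positivity
  field_simp

lemma Fn_integral (n : ℕ) :
    ∫ x in Ioo (0:ℝ) 1, Fn n x = (1 / ((n:ℝ) + 1)) * Real.log (1 + 1 / ((n:ℝ) + 1)) := by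
  have h1 : ∫ x in Ioo (0:ℝ) 1, Fn n x
      = ∫ x in Ioo (0:ℝ) 1, (((n:ℝ)+1)⁻¹ * ((x ^ (n+1) - x ^ n) / Real.log x)) := by
    refine setIntegral_congr_fun measurableSet_Ioo fun x hx => ?_
    have hlog : Real.log x ≠ 0 := (Real.log_neg hx.1 hx.2).ne
    have hn : ((n:ℝ) + 1) ≠ 0 := by positivity
    rw [Fn]
    field_simp
  rw [h1, MeasureTheory.integral_const_mul, key_s14 n, one_div]

lemma hasSum_Fn {x : ℝ} (hx : x ∈ Ioo (0:ℝ) 1) :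
    HasSum (fun n : ℕ => Fn n x) ((1 - x) * Real.log (1 - x) / (x * Real.log x)) := by
  have habs : |x| < 1 := abs_lt.2 ⟨by linarith [hx.1], hx.2⟩
  have h1 := (hasSum_pow_div_log_of_abs_lt_one habs).mul_right ((1 - x⁻¹) / Real.log x)
  have hx0 : x ≠ 0 := hx.1.ne'
  have hlog : Real.log x ≠ 0 := (Real.log_neg hx.1 hx.2).ne
  have heq : (fun n : ℕ => x ^ (n+1) / ((n:ℕ) + 1 : ℝ) * ((1 - x⁻¹) / Real.log x))
      = fun n : ℕ => Fn n x := by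
    funext n
    rw [Fn]
    have hn : ((n:ℝ) + 1) ≠ 0 := by positivity
    field_simp
    ring
  rw [heq] at h1
  convert h1 using 1
  · rfl
  field_simp
  ring

theorem integral_eq_log_series :
    ∫ u in (0:ℝ)..1, ((1 - u) * Real.log (1 - u)) / (u * Real.log u) =
      ∑' n : ℕ, (1 / ((n : ℝ) + 1)) * Real.log (1 + 1 / ((n : ℝ) + 1)) := by
  rw [intervalIntegral.integral_of_le zero_le_one, integral_Ioc_eq_integral_Ioo]
  have hcongr : ∫ u in Ioo (0:ℝ) 1, ((1 - u) * Real.log (1 - u)) / (u * Real.log u)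
      = ∫ u in Ioo (0:ℝ) 1, ∑' n : ℕ, Fn n u := by
    refine setIntegral_congr_fun measurableSet_Ioo fun x hx => ?_
    exact ((hasSum_Fn hx).tsum_eq).symm
  rw [hcongr]
  have hnorm : ∀ n : ℕ, ∫ x in Ioo (0:ℝ) 1, ‖Fn n x‖
      = (1 / ((n:ℝ) + 1)) * Real.log (1 + 1 / ((n:ℝ) + 1)) := by
    intro n
    rw [← Fn_integral n]
    refine setIntegral_congr_fun measurableSet_Ioo fun x hx => ?_
    exact Real.norm_of_nonneg (Fn_nonneg hx)
  have hsummable : Summable (fun n : ℕ => (1 / ((n:ℝ) + 1)) * Real.log (1 + 1 / ((n:ℝ) + 1))) := by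
    have hbig : Summable (fun n : ℕ => (1 / ((n:ℝ) + 1)) * (1 / ((n:ℝ) + 1))) := by
      have h2 : Summable (fun n : ℕ => 1 / ((n:ℝ)) ^ 2) :=
        Real.summable_one_div_nat_pow.2 one_lt_two
      have h3 := (summable_nat_add_iff 1).2 h2
      refine h3.congr fun n => ?_
      push_cast
      rw [div_mul_div_comm, one_mul, sq]
    refine Summable.of_nonneg_of_le (fun n => ?_) (fun n => ?_) hbig
    · have h1 : (0:ℝ) < (n:ℝ) + 1 := by positivity
      have h2 : (0:ℝ) ≤ Real.log (1 + 1 / ((n:ℝ) + 1)) := by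
        apply Real.log_nonneg
        have : (0:ℝ) ≤ 1 / ((n:ℝ) + 1) := by positivity
        linarith
      positivity
    · have h1 : (0:ℝ) < (n:ℝ) + 1 := by positivity
      have h2 : Real.log (1 + 1 / ((n:ℝ) + 1)) ≤ 1 / ((n:ℝ) + 1) := by
        have := Real.log_le_sub_one_of_pos (x := 1 + 1 / ((n:ℝ) + 1)) (by positivity)
        linarith
      have h3 : (0:ℝ) ≤ 1 / ((n:ℝ) + 1) := by positivity
      exact mul_le_mul_of_nonneg_left h2 h3
  have hsum : Summable (fun n : ℕ => ∫ x in Ioo (0:ℝ) 1, ‖Fn n x‖) := by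
    refine hsummable.congr fun n => (hnorm n).symm
  rw [← MeasureTheory.integral_tsum_of_summable_integral_norm Fn_integrable hsum]
  exact tsum_congr fun n => Fn_integral n
end

section
/- ∑_{n=2}^∞ H_n^− (ζ(n) − ζ(n+1)) = π²/6 − γ − ln 2, where H_n^− = 1 − 1/2 + ⋯ + (−1)^{n−1}/n is the n-th skew-harmonic number. -/
/-- The `n`-th skew-harmonic number `1 - 1/2 + 1/3 - ⋯ + (-1)^(n-1)/n`. -/
noncomputable def skewHarmonic (n : ℕ) : ℝ := ∑ i ∈ Finset.range n, (-1 : ℝ) ^ i / (i + 1)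

open Filter Topology Real Finset

lemma skewHarmonic_succ (m : ℕ) :
    skewHarmonic (m + 1) = skewHarmonic m + (-1) ^ m / (m + 1) := by
  simp [skewHarmonic, Finset.sum_range_succ]

lemma skewHarmonic_bounds (m : ℕ) :
    (Even m → 0 ≤ skewHarmonic m ∧ skewHarmonic m + 1 / (m + 1) ≤ 1) ∧
    (¬ Even m → 1 / ((m : ℝ) + 1) ≤ skewHarmonic m ∧ skewHarmonic m ≤ 1) := by
  induction m with
  | zero =>
    refine ⟨fun _ => ?_, fun h => absurd Even.zero h⟩
    norm_num [skewHarmonic]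
  | succ m ih =>
    have hrec := skewHarmonic_succ m
    have h1 : (0:ℝ) < (m:ℝ) + 1 := by positivity
    have h2 : (0:ℝ) < (m:ℝ) + 2 := by positivity
    have h3 : 1 / ((m:ℝ) + 2) ≤ 1 / ((m:ℝ) + 1) := by
      apply one_div_le_one_div_of_le h1; linarith
    by_cases hm : Even m
    · have hpow : (-1 : ℝ) ^ m = 1 := hm.neg_one_pow
      obtain ⟨hl, hu⟩ := ih.1 hm
      have hodd : ¬ Even (m+1) := by simp [Nat.even_add_one, hm]
      refine ⟨fun h => absurd h hodd, fun _ => ?_⟩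
      have h4 : 1 / ((m:ℝ) + 1 + 1) = 1 / ((m:ℝ) + 2) := by ring_nf
      rw [hrec, hpow]
      constructor
      · push_cast; rw [h4]; linarith [one_div_pos.mpr h2, one_div_pos.mpr h1]
      · linarith
    · have hpow : (-1 : ℝ) ^ m = -1 := (Nat.odd_iff.mpr (Nat.not_even_iff.mp hm)).neg_one_pow
      obtain ⟨hl, hu⟩ := ih.2 hm
      have heven : Even (m+1) := by simpa [Nat.even_add_one] using hm
      refine ⟨fun _ => ?_, fun h => absurd heven h⟩
      have h4 : 1 / ((m:ℝ) + 1 + 1) = 1 / ((m:ℝ) + 2) := by ring_nf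
      rw [hrec, hpow, neg_div]
      constructor
      · linarith
      · push_cast; rw [h4]; linarith

lemma skewHarmonic_nonneg (m : ℕ) : 0 ≤ skewHarmonic m := by
  by_cases hm : Even m
  · exact ((skewHarmonic_bounds m).1 hm).1
  · have := ((skewHarmonic_bounds m).2 hm).1
    have h1 : (0:ℝ) < 1 / ((m:ℝ)+1) := by positivity
    linarith

lemma skewHarmonic_le_one (m : ℕ) : skewHarmonic m ≤ 1 := by
  by_cases hm : Even m
  · have := ((skewHarmonic_bounds m).1 hm).2
    have h1 : (0:ℝ) < 1 / ((m:ℝ)+1) := by positivity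
    linarith
  · exact ((skewHarmonic_bounds m).2 hm).2

lemma hasSum_alt_log {x : ℝ} (hx : |x| < 1) :
    HasSum (fun n : ℕ => (-1 : ℝ) ^ n * x ^ (n + 1) / (n + 1)) (Real.log (1 + x)) := by
  have h := (Real.hasSum_pow_div_log_of_abs_lt_one (x := -x) (by rwa [abs_neg])).neg
  rw [sub_neg_eq_add, neg_neg] at h
  refine h.congr_fun fun n => ?_
  rw [neg_pow, pow_succ]
  ring

lemma hasSum_skewHarmonic_mul {x : ℝ} (hx : |x| < 1) :
    HasSum (fun n : ℕ => skewHarmonic (n + 1) * x ^ (n + 1))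
      (Real.log (1 + x) * (1 - x)⁻¹) := by
  have habs : |(|x|)| < 1 := by rwa [abs_abs]
  have hf : Summable (fun n : ℕ => ‖(-1 : ℝ) ^ n * x ^ (n + 1) / (n + 1)‖) := by
    apply (Real.hasSum_pow_div_log_of_abs_lt_one habs).summable.congr
    intro n
    rw [norm_eq_abs, abs_div, abs_mul, abs_pow, abs_pow, abs_neg, abs_one, one_pow, one_mul,
      abs_of_nonneg (by positivity : (0:ℝ) ≤ (n:ℝ) + 1)]
  have hg : Summable (fun n : ℕ => ‖x ^ n‖) := by
    simpa [norm_pow] using summable_geometric_of_lt_one (abs_nonneg x) hx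
  have H := hasSum_sum_range_mul_of_summable_norm hf hg
  rw [(hasSum_alt_log hx).tsum_eq, tsum_geometric_of_norm_lt_one (by rwa [norm_eq_abs])] at H
  apply H.congr_fun
  intro n
  rw [skewHarmonic, Finset.sum_mul]
  apply Finset.sum_congr rfl
  intro k hk
  have hk' : k ≤ n := Nat.lt_succ_iff.mp (Finset.mem_range.mp hk)
  rw [show x ^ (n+1) = x ^ (k+1) * x ^ (n-k) by rw [← pow_add]; congr 1; omega]
  ring

/-- The `j`-th term of the outer series. -/
noncomputable def uTerm (j : ℕ) : ℝ :=
  Real.log ((j : ℝ) + 3) - Real.log ((j : ℝ) + 2) - ((j : ℝ) + 1) / ((j : ℝ) + 2) ^ 2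

lemma inner_hasSum (j : ℕ) :
    HasSum (fun n : ℕ => skewHarmonic (n + 2) * ((j : ℝ) + 1) / ((j : ℝ) + 2) ^ (n + 3))
      (uTerm j) := by
  set x : ℝ := 1 / ((j : ℝ) + 2) with hxdef
  have hj2 : (0:ℝ) < (j : ℝ) + 2 := by positivity
  have hx0 : 0 < x := by positivity
  have hx1 : x < 1 := by
    rw [hxdef, div_lt_one hj2]; linarith
  have hx : |x| < 1 := by rw [abs_of_pos hx0]; exact hx1
  have H := hasSum_skewHarmonic_mul hx
  have H2 := (hasSum_nat_add_iff' (f := fun n => skewHarmonic (n + 1) * x ^ (n + 1)) 1).mpr H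
  simp only [Finset.range_one, Finset.sum_singleton] at H2
  have H3 := H2.mul_left (((j : ℝ) + 1) * x)
  have hterm : ∀ n : ℕ, ((j : ℝ) + 1) * x * (skewHarmonic (n + 1 + 1) * x ^ (n + 1 + 1))
      = skewHarmonic (n + 2) * ((j : ℝ) + 1) / ((j : ℝ) + 2) ^ (n + 3) := by
    intro n
    have hxp : x ^ (n + 3) = 1 / ((j : ℝ) + 2) ^ (n + 3) := by
      rw [hxdef, div_pow, one_pow]
    have : x * x ^ (n + 1 + 1) = x ^ (n + 3) := by ring
    calc ((j : ℝ) + 1) * x * (skewHarmonic (n + 1 + 1) * x ^ (n + 1 + 1))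
        = skewHarmonic (n + 2) * ((j : ℝ) + 1) * (x * x ^ (n + 1 + 1)) := by ring_nf
      _ = skewHarmonic (n + 2) * ((j : ℝ) + 1) / ((j : ℝ) + 2) ^ (n + 3) := by
          rw [this, hxp]; ring
  have hval : ((j : ℝ) + 1) * x * (Real.log (1 + x) * (1 - x)⁻¹ - skewHarmonic (0 + 1) * x ^ (0 + 1))
      = uTerm j := by
    have hs1 : skewHarmonic 1 = 1 := by norm_num [skewHarmonic]
    have h1x : (1:ℝ) + x = ((j : ℝ) + 3) / ((j : ℝ) + 2) := by
      rw [hxdef]; field_simp; ring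
    have h2x : (1:ℝ) - x = ((j : ℝ) + 1) / ((j : ℝ) + 2) := by
      rw [hxdef]; field_simp; ring
    have hj1 : (0:ℝ) < (j : ℝ) + 1 := by positivity
    have hj3 : (0:ℝ) < (j : ℝ) + 3 := by positivity
    rw [h1x, h2x, Real.log_div hj3.ne' hj2.ne', hs1, uTerm, hxdef]
    rw [zero_add, pow_one]
    field_simp
  rw [hval] at H3
  exact H3.congr_fun fun n => (hterm n).symm

lemma log_one_add_le {x : ℝ} (hx : 0 ≤ x) : Real.log (1 + x) ≤ x := by
  have := Real.log_le_sub_one_of_pos (by linarith : (0:ℝ) < 1 + x)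
  linarith

lemma le_log_one_add {x : ℝ} (hx : 0 ≤ x) : x - x ^ 2 ≤ Real.log (1 + x) := by
  have h1 : (0:ℝ) < 1 + x := by linarith
  have h2 := Real.log_le_sub_one_of_pos (show (0:ℝ) < (1 + x)⁻¹ by positivity)
  rw [Real.log_inv] at h2
  have h3 : x / (1 + x) ≤ Real.log (1 + x) := by
    have : (1 + x)⁻¹ - 1 = -(x / (1 + x)) := by field_simp; ring
    rw [this] at h2; linarith
  have h4 : x - x ^ 2 ≤ x / (1 + x) := by
    rw [le_div_iff₀ h1]
    nlinarith [pow_nonneg hx 3]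
  linarith [h4.trans h3]

lemma uTerm_eq (j : ℕ) :
    uTerm j = Real.log (1 + 1 / ((j:ℝ) + 2)) - (1 / ((j:ℝ) + 2) - (1 / ((j:ℝ) + 2)) ^ 2) := by
  have hj2 : (0:ℝ) < (j : ℝ) + 2 := by positivity
  have hj3 : (0:ℝ) < (j : ℝ) + 3 := by positivity
  have h1x : (1:ℝ) + 1 / ((j:ℝ) + 2) = ((j : ℝ) + 3) / ((j : ℝ) + 2) := by field_simp; ring
  rw [uTerm, h1x, Real.log_div hj3.ne' hj2.ne']
  field_simp
  ring

lemma uTerm_nonneg (j : ℕ) : 0 ≤ uTerm j := by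
  rw [uTerm_eq]
  have h : (0:ℝ) ≤ 1 / ((j:ℝ) + 2) := by positivity
  linarith [le_log_one_add h]

lemma uTerm_le (j : ℕ) : uTerm j ≤ (1 / ((j:ℝ) + 2)) ^ 2 := by
  rw [uTerm_eq]
  have h : (0:ℝ) ≤ 1 / ((j:ℝ) + 2) := by positivity
  linarith [log_one_add_le h]

lemma summable_sq : Summable (fun j : ℕ => (1 / ((j:ℝ) + 2)) ^ 2) := by
  have h : Summable (fun n : ℕ => 1 / (n:ℝ) ^ 2) := summable_one_div_nat_pow.mpr one_lt_two
  have h2 := (summable_nat_add_iff 2).mpr h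
  apply h2.congr
  intro j
  push_cast
  rw [div_pow, one_pow]

lemma summable_uTerm : Summable uTerm :=
  Summable.of_nonneg_of_le uTerm_nonneg uTerm_le summable_sq

lemma hasSum_sq : HasSum (fun j : ℕ => (1 / ((j:ℝ) + 2)) ^ 2) (Real.pi ^ 2 / 6 - 1) := by
  have h := hasSum_zeta_two
  have h2 := (hasSum_nat_add_iff' (f := fun n : ℕ => 1 / (n:ℝ) ^ 2) 2).mpr h
  have hs : ∑ i ∈ Finset.range 2, 1 / (i:ℝ) ^ 2 = 1 := by
    norm_num [Finset.sum_range_succ]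
  rw [hs] at h2
  apply h2.congr_fun
  intro j
  push_cast
  rw [div_pow, one_pow]

lemma hasSum_uTerm :
    HasSum uTerm (Real.pi ^ 2 / 6 - Real.eulerMascheroniConstant - Real.log 2) := by
  rw [summable_uTerm.hasSum_iff_tendsto_nat]
  have key : ∀ N : ℕ, ∑ j ∈ Finset.range N, uTerm j =
      -(((harmonic (N+1) : ℝ)) - Real.log ((N:ℝ) + 2)) +
        (∑ j ∈ Finset.range N, (1 / ((j:ℝ) + 2)) ^ 2) + (1 - Real.log 2) := by
    intro N
    have htel : ∑ j ∈ Finset.range N, (Real.log ((j:ℝ) + 3) - Real.log ((j:ℝ) + 2))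
        = Real.log ((N:ℝ) + 2) - Real.log 2 := by
      have h := Finset.sum_range_sub (f := fun j : ℕ => Real.log ((j:ℝ) + 2)) N
      rw [show Real.log ((N:ℝ) + 2) - Real.log 2
          = Real.log (((N:ℕ):ℝ) + 2) - Real.log (((0:ℕ):ℝ) + 2) by norm_num, ← h]
      apply Finset.sum_congr rfl
      intro i _
      push_cast
      ring_nf
    have hharm : (harmonic (N+1) : ℝ) = 1 + ∑ j ∈ Finset.range N, 1 / ((j:ℝ) + 2) := by
      rw [harmonic, Finset.sum_range_succ']
      push_cast
      rw [add_comm]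
      congr 1
      · norm_num
      · apply Finset.sum_congr rfl
        intro i _
        rw [one_div]
        norm_num
        ring_nf
    have hu : ∀ j : ℕ, uTerm j = (Real.log ((j:ℝ)+3) - Real.log ((j:ℝ)+2))
        - 1/((j:ℝ)+2) + (1/((j:ℝ)+2))^2 := by
      intro j
      rw [uTerm]
      have hne : ((j:ℝ)+2) ≠ 0 := by positivity
      field_simp
      ring
    simp_rw [hu]
    rw [Finset.sum_add_distrib, Finset.sum_sub_distrib, htel, hharm]
    ring
  have t1 : Tendsto (fun N : ℕ => (harmonic (N+1) : ℝ) - Real.log ((N:ℝ) + 2)) atTop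
      (𝓝 Real.eulerMascheroniConstant) := by
    have h := Real.tendsto_harmonic_sub_log_add_one.comp (tendsto_add_atTop_nat 1)
    apply h.congr
    intro n
    simp only [Function.comp_apply]
    push_cast
    ring_nf
  have T := (t1.neg.add hasSum_sq.tendsto_sum_nat).add_const (1 - Real.log 2)
  have heq : Real.pi ^ 2 / 6 - Real.eulerMascheroniConstant - Real.log 2
      = -Real.eulerMascheroniConstant + (Real.pi ^ 2 / 6 - 1) + (1 - Real.log 2) := by ring
  rw [heq]
  exact T.congr fun N => (key N).symm

noncomputable def Fterm (p : ℕ × ℕ) : ℝ :=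
  skewHarmonic (p.2 + 2) * ((p.1 : ℝ) + 1) / ((p.1 : ℝ) + 2) ^ (p.2 + 3)

lemma Fterm_nonneg : (0 : ℕ × ℕ → ℝ) ≤ Fterm := by
  intro p
  have h := skewHarmonic_nonneg (p.2 + 2)
  have h1 : (0:ℝ) ≤ (p.1 : ℝ) + 1 := by positivity
  have h2 : (0:ℝ) < ((p.1 : ℝ) + 2) ^ (p.2 + 3) := by positivity
  exact div_nonneg (mul_nonneg h h1) h2.le

lemma summable_Fterm : Summable Fterm := by
  rw [summable_prod_of_nonneg Fterm_nonneg]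
  constructor
  · intro j
    exact (inner_hasSum j).summable
  · apply summable_uTerm.congr
    intro j
    exact ((inner_hasSum j).tsum_eq).symm

lemma summable_Z (m : ℕ) (hm : 2 ≤ m) : Summable (fun k : ℕ => 1 / ((k:ℝ) + 1) ^ m) := by
  have h : Summable (fun n : ℕ => 1 / (n:ℝ) ^ m) := summable_one_div_nat_pow.mpr (by omega)
  apply ((summable_nat_add_iff 1).mpr h).congr
  intro k
  push_cast
  rfl

lemma zeta_real (m : ℕ) (hm : 2 ≤ m) :
    riemannZeta ((m : ℕ) : ℂ) = ((∑' k : ℕ, 1 / ((k:ℝ) + 1) ^ m : ℝ) : ℂ) := by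
  rw [zeta_eq_tsum_one_div_nat_add_one_cpow (by
    rw [Complex.natCast_re]; exact_mod_cast by omega : 1 < Complex.re ((m : ℕ) : ℂ))]
  rw [Complex.ofReal_tsum]
  apply tsum_congr
  intro k
  rw [Complex.cpow_natCast]
  push_cast
  rfl

lemma diff_eq (n : ℕ) :
    (∑' k : ℕ, 1 / ((k:ℝ) + 1) ^ (n + 2)) - (∑' k : ℕ, 1 / ((k:ℝ) + 1) ^ (n + 3))
      = ∑' j : ℕ, ((j:ℝ) + 1) / ((j:ℝ) + 2) ^ (n + 3) := by
  have h2 := summable_Z (n + 2) (by omega)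
  have h3 := summable_Z (n + 3) (by omega)
  rw [← Summable.tsum_sub h2 h3, Summable.tsum_eq_zero_add (h2.sub h3)]
  have h0 : 1 / (((0:ℕ):ℝ) + 1) ^ (n + 2) - 1 / (((0:ℕ):ℝ) + 1) ^ (n + 3) = 0 := by norm_num
  rw [h0, zero_add]
  apply tsum_congr
  intro j
  have hc : ((j:ℝ) + 2) ≠ 0 := by positivity
  have hp : ((j:ℝ) + 1 + 1) = ((j:ℝ) + 2) := by ring
  push_cast
  rw [hp, pow_succ ((j:ℝ) + 2) (n + 2)]
  field_simp
  ring

lemma zeta_side (n : ℕ) :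
    (skewHarmonic (n + 2) : ℂ) * (riemannZeta ((n : ℂ) + 2) - riemannZeta ((n : ℂ) + 3))
      = ((∑' j : ℕ, Fterm (j, n) : ℝ) : ℂ) := by
  have e2 : ((n : ℂ) + 2) = ((n + 2 : ℕ) : ℂ) := by push_cast; ring
  have e3 : ((n : ℂ) + 3) = ((n + 3 : ℕ) : ℂ) := by push_cast; ring
  rw [e2, e3, zeta_real (n + 2) (by omega), zeta_real (n + 3) (by omega),
    ← Complex.ofReal_sub, ← Complex.ofReal_mul]
  congr 1
  rw [diff_eq n, ← tsum_mul_left]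
  apply tsum_congr
  intro j
  show skewHarmonic (n + 2) * (((j:ℝ) + 1) / ((j:ℝ) + 2) ^ (n + 3)) = Fterm (j, n)
  rw [Fterm, mul_div_assoc]

theorem skewHarmonic_zeta_diff_series :
    ∑' n : ℕ, (skewHarmonic (n + 2) : ℂ) *
        (riemannZeta ((n : ℂ) + 2) - riemannZeta ((n : ℂ) + 3)) =
      (Real.pi : ℂ) ^ 2 / 6 - (Real.eulerMascheroniConstant : ℂ) - (Real.log 2 : ℂ) := by
  have step1 : ∑' n : ℕ, (skewHarmonic (n + 2) : ℂ) *
        (riemannZeta ((n : ℂ) + 2) - riemannZeta ((n : ℂ) + 3))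
      = ((∑' n : ℕ, ∑' j : ℕ, Fterm (j, n) : ℝ) : ℂ) := by
    rw [Complex.ofReal_tsum]
    exact tsum_congr zeta_side
  rw [step1]
  have step2 : (∑' n : ℕ, ∑' j : ℕ, Fterm (j, n) : ℝ) = ∑' j : ℕ, ∑' n : ℕ, Fterm (j, n) :=
    Summable.tsum_comm (f := fun (j n : ℕ) => Fterm (j, n)) summable_Fterm
  have step3 : (∑' j : ℕ, ∑' n : ℕ, Fterm (j, n) : ℝ) = ∑' j : ℕ, uTerm j :=
    tsum_congr fun j => (inner_hasSum j).tsum_eq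
  rw [step2, step3, hasSum_uTerm.tsum_eq]
  push_cast
  ring
end

section
/- ∑_{n=2}^∞ H_n (ζ(n) − ζ(n+1)) = π²/6 − γ. -/
open Real Finset

namespace HZDaux

/-- The double-sum term. -/
noncomputable def F (p : ℕ × ℕ) : ℝ :=
  (harmonic (p.2 + 2) : ℝ) * (1 / (p.1 : ℝ) ^ (p.2 + 2) - 1 / (p.1 : ℝ) ^ (p.2 + 3))

lemma harmonic_cast_eq (m : ℕ) :
    (harmonic m : ℝ) = ∑ i ∈ range m, ((i : ℝ) + 1)⁻¹ := by
  rw [harmonic]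
  push_cast
  rfl

/-- Generating function of harmonic numbers. -/
lemma hasSum_harmonic_mul {x : ℝ} (hx : |x| < 1) :
    HasSum (fun n : ℕ => (harmonic (n + 1) : ℝ) * x ^ (n + 1))
      (-Real.log (1 - x) * (1 - x)⁻¹) := by
  have hf : Summable fun n : ℕ => ‖x ^ (n + 1) / ((n : ℝ) + 1)‖ := by
    refine Summable.of_nonneg_of_le (fun n => norm_nonneg _) (fun n => ?_)
      (summable_geometric_of_lt_one (abs_nonneg x) hx)
    have h1 : ‖x ^ (n + 1) / ((n : ℝ) + 1)‖ = |x| ^ (n + 1) / ((n : ℝ) + 1) := by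
      rw [norm_div, Real.norm_eq_abs, Real.norm_eq_abs, abs_pow,
        abs_of_nonneg (by positivity : (0:ℝ) ≤ (n:ℝ) + 1)]
    rw [h1]
    calc |x| ^ (n + 1) / ((n : ℝ) + 1) ≤ |x| ^ (n + 1) := by
          apply div_le_self (by positivity); simp
      _ = |x| ^ n * |x| := pow_succ _ _
      _ ≤ |x| ^ n * 1 := by
          apply mul_le_mul_of_nonneg_left (le_of_lt hx) (by positivity)
      _ = |x| ^ n := mul_one _
  have hg : Summable fun n : ℕ => ‖x ^ n‖ := by
    simpa [norm_pow] using summable_geometric_of_lt_one (abs_nonneg x) hx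
  have hinner : ∀ n : ℕ, ∑ k ∈ range (n + 1), (x ^ (k + 1) / ((k : ℝ) + 1)) * x ^ (n - k)
      = (harmonic (n + 1) : ℝ) * x ^ (n + 1) := by
    intro n
    have h1 : ∀ k ∈ range (n + 1),
        (x ^ (k + 1) / ((k : ℝ) + 1)) * x ^ (n - k) = x ^ (n + 1) * ((k : ℝ) + 1)⁻¹ := by
      intro k hk
      rw [mem_range] at hk
      rw [div_mul_eq_mul_div, ← pow_add, div_eq_mul_inv]
      congr 2
      omega
    rw [Finset.sum_congr rfl h1, ← Finset.mul_sum, mul_comm, harmonic_cast_eq]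
  have hmul : Summable fun n : ℕ => (harmonic (n + 1) : ℝ) * x ^ (n + 1) :=
    ((summable_norm_sum_mul_range_of_summable_norm hf hg).of_norm).congr hinner
  have hL := hasSum_pow_div_log_of_abs_lt_one hx
  have hG := hasSum_geometric_of_abs_lt_one hx
  have htsum := tsum_mul_tsum_eq_tsum_sum_range_of_summable_norm hf hg
  have hval : (∑' n : ℕ, (harmonic (n + 1) : ℝ) * x ^ (n + 1))
      = -Real.log (1 - x) * (1 - x)⁻¹ := by
    rw [← hL.tsum_eq, ← hG.tsum_eq, htsum]
    exact (tsum_congr hinner).symm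
  exact hval ▸ hmul.hasSum

/-- Row sums of `F` for `k = j + 2`. -/
lemma hasSum_row (j : ℕ) :
    HasSum (fun n : ℕ => F (j + 2, n))
      (ZetaAsymptotics.term (j + 1) 1 + 1 / ((j : ℝ) + 2) ^ 2) := by
  set x : ℝ := ((j : ℝ) + 2)⁻¹ with hxdef
  have hj2 : (0:ℝ) < (j : ℝ) + 2 := by positivity
  have hx0 : (0:ℝ) < x := by positivity
  have hx1 : x < 1 := by
    rw [hxdef, inv_lt_one_iff₀]
    right; linarith
  have hxa : |x| < 1 := by rwa [abs_of_pos hx0]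
  have h1mx : 1 - x = ((j : ℝ) + 1) / ((j : ℝ) + 2) := by
    rw [hxdef]; field_simp; ring
  have h1mx0 : (0:ℝ) < 1 - x := by linarith
  have h1 := hasSum_harmonic_mul hxa
  have h2 := (hasSum_nat_add_iff'
    (f := fun n : ℕ => (harmonic (n + 1) : ℝ) * x ^ (n + 1)) 1).mpr h1
  have h3 := h2.mul_right (1 - x)
  have hfun : (fun n : ℕ => ((harmonic (n + 1 + 1) : ℝ) * x ^ (n + 1 + 1)) * (1 - x))
      = fun n : ℕ => F (j + 2, n) := by
    funext n
    show ((harmonic (n + 2) : ℝ) * x ^ (n + 2)) * (1 - x) = F (j + 2, n)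
    rw [F]
    push_cast
    rw [hxdef]
    rw [inv_pow]
    field_simp
    ring
  rw [hfun] at h3
  convert h3 using 1
  · rfl
  rw [ZetaAsymptotics.term_one (by omega : 0 < j + 1)]
  rw [Finset.sum_range_one]
  have hh1 : (harmonic (0 + 1) : ℝ) * x ^ (0 + 1) = x := by
    norm_num [harmonic_succ, harmonic_zero]
  rw [hh1]
  have hval : (-Real.log (1 - x) * (1 - x)⁻¹ - x) * (1 - x)
      = -Real.log (1 - x) - x * (1 - x) := by
    field_simp
  have hlog : -Real.log (1 - x) = Real.log ((j : ℝ) + 2) - Real.log ((j : ℝ) + 1) := by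
    rw [h1mx, Real.log_div (by positivity) (by positivity)]
    ring
  rw [hval, hlog]
  have hxx : x * (1 - x) = 1 / ((j : ℝ) + 2) - 1 / ((j : ℝ) + 2) ^ 2 := by
    rw [hxdef]; field_simp
  rw [hxx]
  push_cast
  rw [show ((j : ℝ) + 1 + 1) = (j : ℝ) + 2 by ring]
  ring


lemma F_nonneg : 0 ≤ F := by
  intro p
  obtain ⟨k, n⟩ := p
  refine mul_nonneg ?_ ?_
  · exact (show (0:ℝ) ≤ (harmonic (n + 2) : ℝ) from Rat.cast_nonneg.mpr (harmonic_pos (by omega : n + 2 ≠ 0)).le)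
  · rcases Nat.eq_zero_or_pos k with hk | hk
    · simp [hk, zero_pow]
    · have hk1 : (1:ℝ) ≤ (k:ℝ) := by exact_mod_cast hk
      have hpow : (k:ℝ) ^ (n + 2) ≤ (k:ℝ) ^ (n + 3) :=
        pow_le_pow_right₀ hk1 (by omega)
      have hp0 : (0:ℝ) < (k:ℝ) ^ (n + 2) := by positivity
      simp only [sub_nonneg]
      exact one_div_le_one_div_of_le hp0 hpow

lemma F_row0 (n : ℕ) : F (0, n) = 0 := by
  simp [F]

lemma F_row1 (n : ℕ) : F (1, n) = 0 := by
  simp [F]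

lemma hasSum_outer :
    HasSum (fun j : ℕ => ZetaAsymptotics.term (j + 1) 1 + 1 / ((j : ℝ) + 2) ^ 2)
      (π ^ 2 / 6 - Real.eulerMascheroniConstant) := by
  have h1 := ZetaAsymptotics.term_tsum_one
  have h2 : HasSum (fun j : ℕ => 1 / ((j : ℝ) + 2) ^ 2) (π ^ 2 / 6 - 1) := by
    have h3 := (hasSum_nat_add_iff' (f := fun n : ℕ => (1:ℝ) / (n : ℝ) ^ 2) 2).mpr
      hasSum_zeta_two
    have hr : ∑ i ∈ range 2, (1:ℝ) / (i : ℝ) ^ 2 = 1 := by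
      rw [Finset.sum_range_succ, Finset.sum_range_one]
      norm_num
    rw [hr] at h3
    refine h3.congr_fun fun n => ?_
    push_cast
    ring_nf
  have h4 := h1.add h2
  convert h4 using 1
  ring

lemma hasSum_rowsums :
    HasSum (fun k : ℕ => ∑' n, F (k, n)) (π ^ 2 / 6 - Real.eulerMascheroniConstant) := by
  rw [← hasSum_nat_add_iff' 2]
  have h01 : ∑ i ∈ range 2, ∑' n, F (i, n) = 0 := by
    rw [Finset.sum_range_succ, Finset.sum_range_one]
    rw [tsum_congr F_row0, tsum_congr F_row1, tsum_zero]
    norm_num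
  rw [h01, sub_zero]
  refine hasSum_outer.congr_fun fun j => ?_
  exact (hasSum_row j).tsum_eq

lemma summable_F : Summable F := by
  rw [summable_prod_of_nonneg F_nonneg]
  constructor
  · intro k
    match k with
    | 0 => exact summable_zero.congr fun n => (F_row0 n).symm
    | 1 => exact summable_zero.congr fun n => (F_row1 n).symm
    | (j + 2) => exact (hasSum_row j).summable
  · exact hasSum_rowsums.summable

lemma hasSum_F : HasSum F (π ^ 2 / 6 - Real.eulerMascheroniConstant) := by
  have h1 := summable_F.hasSum
  have h2 := h1.prod_fiberwise (g := fun k => ∑' n, F (k, n)) fun k =>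
    (((summable_prod_of_nonneg F_nonneg).mp summable_F).1 k).hasSum
  rwa [h2.unique hasSum_rowsums] at h1

lemma summable_col (n : ℕ) : Summable fun k : ℕ => F (k, n) := by
  have hG : Summable (F ∘ ⇑(Equiv.prodComm ℕ ℕ)) :=
    (Equiv.summable_iff _).mpr summable_F
  have := ((summable_prod_of_nonneg (fun p => F_nonneg (p.2, p.1))).mp hG).1 n
  exact this

lemma hasSum_colsums :
    HasSum (fun n : ℕ => ∑' k, F (k, n)) (π ^ 2 / 6 - Real.eulerMascheroniConstant) := by
  have hG : HasSum (F ∘ ⇑(Equiv.prodComm ℕ ℕ)) (π ^ 2 / 6 - Real.eulerMascheroniConstant) :=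
    (Equiv.hasSum_iff _).mpr hasSum_F
  exact hG.prod_fiberwise fun n => (summable_col n).hasSum

lemma zeta_term (n : ℕ) :
    (harmonic (n + 2) : ℂ) * (riemannZeta ((n : ℂ) + 2) - riemannZeta ((n : ℂ) + 3))
      = ((∑' k, F (k, n) : ℝ) : ℂ) := by
  have e2 : ((n : ℂ) + 2) = ((n + 2 : ℕ) : ℂ) := by push_cast; ring
  have e3 : ((n : ℂ) + 3) = ((n + 3 : ℕ) : ℂ) := by push_cast; ring
  rw [e2, e3, zeta_nat_eq_tsum_of_gt_one (by omega : 1 < n + 2),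
    zeta_nat_eq_tsum_of_gt_one (by omega : 1 < n + 3)]
  have s2 : Summable fun k : ℕ => 1 / (k : ℝ) ^ (n + 2) :=
    summable_one_div_nat_pow.mpr (by omega)
  have s3 : Summable fun k : ℕ => 1 / (k : ℝ) ^ (n + 3) :=
    summable_one_div_nat_pow.mpr (by omega)
  have t2 : (∑' k : ℕ, 1 / (k : ℂ) ^ (n + 2)) = ((∑' k : ℕ, 1 / (k : ℝ) ^ (n + 2) : ℝ) : ℂ) := by
    rw [Complex.ofReal_tsum]
    exact tsum_congr fun k => by push_cast; ring
  have t3 : (∑' k : ℕ, 1 / (k : ℂ) ^ (n + 3)) = ((∑' k : ℕ, 1 / (k : ℝ) ^ (n + 3) : ℝ) : ℂ) := by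
    rw [Complex.ofReal_tsum]
    exact tsum_congr fun k => by push_cast; ring
  rw [t2, t3]
  have hsum : ∑' k, F (k, n)
      = (harmonic (n + 2) : ℝ) * ((∑' k : ℕ, 1 / (k : ℝ) ^ (n + 2)) - ∑' k : ℕ, 1 / (k : ℝ) ^ (n + 3)) := by
    rw [← Summable.tsum_sub s2 s3, ← tsum_mul_left]
    rfl
  rw [hsum]
  push_cast
  ring

end HZDaux

theorem harmonic_zeta_diff_series :
    ∑' n : ℕ, (harmonic (n + 2) : ℂ) *
        (riemannZeta ((n : ℂ) + 2) - riemannZeta ((n : ℂ) + 3)) =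
      (Real.pi : ℂ) ^ 2 / 6 - (Real.eulerMascheroniConstant : ℂ) := by
  rw [tsum_congr HZDaux.zeta_term, ← Complex.ofReal_tsum,
    HZDaux.hasSum_colsums.tsum_eq]
  push_cast
  ring
end

section
/- For real a > 0 and |x| < a, ∑_{n=2}^∞ H_n (ζ(n,a) − x ζ(n+1,a)) x^n = ζ(2,a) x² + ψ(a) x + log Γ(a−x) − log Γ(a). -/
/-- Hurwitz zeta function `ζ(n, a) = ∑_{k≥0} 1/(k+a)^n` for an integer exponent. -/
noncomputable def hzeta (n : ℕ) (a : ℝ) : ℝ := ∑' k : ℕ, 1 / ((k : ℝ) + a) ^ n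

/-- The real digamma function `ψ(x) = Γ'(x)/Γ(x)`. -/
noncomputable def digamma (x : ℝ) : ℝ := deriv Real.Gamma x / Real.Gamma x

namespace HHPS

open Real Filter Topology Set Finset

lemma harmonic_le_real (n : ℕ) : (harmonic n : ℝ) ≤ n := by
  induction n with
  | zero => simp
  | succ n ih =>
    rw [harmonic_succ]
    push_cast
    have h1 : ((n : ℝ) + 1)⁻¹ ≤ 1 := by
      rw [inv_le_one_iff₀]; right; linarith [Nat.cast_nonneg (α := ℝ) n]
    linarith

lemma harmonic_nonneg_real (n : ℕ) : 0 ≤ (harmonic n : ℝ) := by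
  induction n with
  | zero => simp
  | succ n ih =>
    rw [harmonic_succ]
    push_cast
    have h2 : (0:ℝ) < ((n : ℝ) + 1)⁻¹ := by positivity
    linarith


lemma summable_inv_pow {c : ℝ} (hc : 0 < c) (j : ℕ) :
    Summable (fun k : ℕ => 1 / ((k : ℝ) + c) ^ (j + 2)) := by
  have base : Summable (fun k : ℕ => 1 / ((k : ℝ) + c) ^ 2) := by
    have h := (Real.summable_one_div_nat_add_rpow c 2).mpr one_lt_two
    refine h.congr fun k => ?_
    rw [abs_of_pos (by positivity), show (2 : ℝ) = ((2 : ℕ) : ℝ) by norm_num,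
      Real.rpow_natCast]
  refine Summable.of_norm_bounded (base.mul_left (1 / c ^ j)) fun k => ?_
  have h1 : (0 : ℝ) < (k : ℝ) + c := by positivity
  rw [Real.norm_eq_abs, abs_of_pos (by positivity)]
  calc 1 / ((k : ℝ) + c) ^ (j + 2) = 1 / (((k : ℝ) + c) ^ j * ((k : ℝ) + c) ^ 2) := by
        rw [pow_add]
    _ ≤ 1 / (c ^ j * ((k : ℝ) + c) ^ 2) := by
        apply one_div_le_one_div_of_le (by positivity)
        have hcc : c ^ j ≤ ((k : ℝ) + c) ^ j := by
          gcongr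
          · linarith [Nat.cast_nonneg (α := ℝ) k]
        nlinarith [sq_nonneg ((k : ℝ) + c), pow_pos h1 2]
    _ = 1 / c ^ j * (1 / ((k : ℝ) + c) ^ 2) := by
        rw [one_div_mul_one_div]

lemma hasSum_log_shift2 {t : ℝ} (ht : |t| < 1) :
    HasSum (fun n : ℕ => t ^ (n + 3) / ((n : ℝ) + 3)) (-Real.log (1 - t) - t - t ^ 2 / 2) := by
  have hlog := Real.hasSum_pow_div_log_of_abs_lt_one ht
  have h2 : HasSum (fun n : ℕ => t ^ (n + 2 + 1) / (((n + 2 : ℕ) : ℝ) + 1))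
      (-Real.log (1 - t) - t - t ^ 2 / 2) := by
    rw [hasSum_nat_add_iff (f := fun n : ℕ => t ^ (n + 1) / ((n : ℝ) + 1)) 2]
    convert hlog using 1
    · rfl
    simp [Finset.sum_range_succ]
    ring
  refine h2.congr_fun fun n => ?_
  push_cast
  ring_nf

lemma summable_harmonic_geom {t : ℝ} (ht : |t| < 1) :
    Summable (fun n : ℕ => (harmonic (n + 2) : ℝ) * t ^ (n + 2)) := by
  have hg : Summable (fun m : ℕ => (m : ℝ) * |t| ^ m) := by
    simpa using summable_pow_mul_geometric_of_norm_lt_one 1 (r := |t|) (by simpa using ht)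
  have hg2 : Summable (fun n : ℕ => ((n : ℝ) + 2) * |t| ^ (n + 2)) := by
    have h := (summable_nat_add_iff 2).mpr hg
    exact h.congr fun n => by push_cast; ring
  refine Summable.of_norm_bounded hg2 fun n => ?_
  rw [Real.norm_eq_abs, abs_mul, abs_pow]
  have hH : |(harmonic (n + 2) : ℝ)| ≤ (n : ℝ) + 2 := by
    rw [abs_of_nonneg (harmonic_nonneg_real _)]
    have := harmonic_le_real (n + 2)
    push_cast at this
    linarith
  have := mul_le_mul_of_nonneg_right hH (pow_nonneg (abs_nonneg t) (n + 2))
  simpa using this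

lemma hasSum_inner {t : ℝ} (ht : |t| < 1) :
    HasSum (fun n : ℕ => (harmonic (n + 2) : ℝ) * (t ^ (n + 2) - t ^ (n + 3)))
      (t ^ 2 - t - Real.log (1 - t)) := by
  set u : ℕ → ℝ := fun n => (harmonic (n + 2) : ℝ) * t ^ (n + 2) with hu_def
  have hu : Summable u := summable_harmonic_geom ht
  have hS : HasSum u (∑' n, u n) := hu.hasSum
  have hS1 : HasSum (fun n => u (n + 1)) ((∑' n, u n) - u 0) := by
    rw [hasSum_nat_add_iff 1]
    simpa using hS
  have htele : HasSum (fun n => u n - u (n + 1)) (u 0) := by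
    simpa using hS.sub hS1
  have hshift := hasSum_log_shift2 ht
  have hmain := htele.add hshift
  have hfun : ∀ n : ℕ, (u n - u (n + 1)) + t ^ (n + 3) / ((n : ℝ) + 3)
      = (harmonic (n + 2) : ℝ) * (t ^ (n + 2) - t ^ (n + 3)) := by
    intro n
    have hh : (harmonic (n + 3) : ℝ) = (harmonic (n + 2) : ℝ) + 1 / ((n : ℝ) + 3) := by
      rw [show n + 3 = (n + 2) + 1 from rfl, harmonic_succ]
      push_cast
      ring
    simp only [hu_def]
    rw [show n + 1 + 2 = n + 3 from rfl, hh]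
    ring
  have hval : u 0 + (-Real.log (1 - t) - t - t ^ 2 / 2) = t ^ 2 - t - Real.log (1 - t) := by
    have h0 : u 0 = (3 / 2 : ℝ) * t ^ 2 := by
      simp only [hu_def]
      norm_num [show harmonic 2 = 3 / 2 by norm_num [harmonic_succ, harmonic_zero]]
    rw [h0]; ring
  rw [← hval]
  exact hmain.congr_fun fun n => (hfun n).symm

lemma abs_neg_log_bound {t r : ℝ} (htr : |t| ≤ r) (hr : r < 1) :
    |(-t - Real.log (1 - t))| ≤ t ^ 2 * (1 / (1 - r)) := by
  have ht : |t| < 1 := lt_of_le_of_lt htr hr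
  have hlog := Real.hasSum_pow_div_log_of_abs_lt_one ht
  have h1 : HasSum (fun n : ℕ => t ^ (n + 2) / ((n : ℝ) + 2)) (-Real.log (1 - t) - t) := by
    have h2 : HasSum (fun n : ℕ => t ^ (n + 1 + 1) / (((n + 1 : ℕ) : ℝ) + 1))
        (-Real.log (1 - t) - t) := by
      rw [hasSum_nat_add_iff (f := fun n : ℕ => t ^ (n + 1) / ((n : ℝ) + 1)) 1]
      convert hlog using 1
      · rfl
      simp [Finset.sum_range_succ]
    refine h2.congr_fun fun n => ?_
    push_cast
    ring_nf
  have h2 : HasSum (fun n : ℕ => |t| ^ (n + 2)) (|t| ^ 2 * (1 - |t|)⁻¹) := by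
    have := (hasSum_geometric_of_lt_one (abs_nonneg t) ht).mul_left (|t| ^ 2)
    refine this.congr_fun fun n => ?_
    rw [pow_add, mul_comm]
  have hb : ‖(-Real.log (1 - t) - t)‖ ≤ |t| ^ 2 * (1 - |t|)⁻¹ := by
    rw [← h1.tsum_eq]
    refine tsum_of_norm_bounded h2 fun n => ?_
    rw [Real.norm_eq_abs, abs_div, abs_pow, abs_of_pos (show (0:ℝ) < (n : ℝ) + 2 by positivity)]
    exact div_le_self (by positivity) (by linarith [Nat.cast_nonneg (α := ℝ) n])
  have heq : -t - Real.log (1 - t) = -Real.log (1 - t) - t := by ring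
  rw [heq, ← Real.norm_eq_abs]
  refine hb.trans ?_
  rw [sq_abs, one_div]
  apply mul_le_mul_of_nonneg_left _ (sq_nonneg t)
  apply inv_anti₀ (by linarith)
  linarith


/-! ### Digamma theory -/

noncomputable def psi (y : ℝ) : ℝ := deriv (fun z : ℝ => Real.log (Real.Gamma z)) y

lemma diffGamma {y : ℝ} (hy : 0 < y) : DifferentiableAt ℝ Real.Gamma y :=
  Real.differentiableAt_Gamma fun m =>
    ne_of_gt (lt_of_le_of_lt (neg_nonpos.mpr (Nat.cast_nonneg m)) hy)

lemma diff_lG {y : ℝ} (hy : 0 < y) :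
    DifferentiableAt ℝ (fun z : ℝ => Real.log (Real.Gamma z)) y :=
  (diffGamma hy).log (Real.Gamma_pos_of_pos hy).ne'

lemma psi_eq_digamma {y : ℝ} (hy : 0 < y) : psi y = digamma y := by
  rw [psi, digamma, deriv.log (diffGamma hy) (Real.Gamma_pos_of_pos hy).ne']

lemma lG_rec {y : ℝ} (hy : 0 < y) :
    Real.log (Real.Gamma (y + 1)) = Real.log (Real.Gamma y) + Real.log y := by
  rw [Real.Gamma_add_one hy.ne', Real.log_mul hy.ne' (Real.Gamma_pos_of_pos hy).ne', add_comm]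

lemma psi_rec {y : ℝ} (hy : 0 < y) : psi (y + 1) = psi y + 1 / y := by
  unfold psi
  rw [← deriv_comp_add_const, one_div, ← Real.deriv_log,
    ← deriv_add (diff_lG hy) (Real.differentiableAt_log hy.ne')]
  apply Filter.EventuallyEq.deriv_eq
  filter_upwards [eventually_gt_nhds hy] with z hz
  exact lG_rec hz

lemma psi_add_nat {y : ℝ} (hy : 0 < y) (N : ℕ) :
    psi (y + N) = psi y + ∑ k ∈ Finset.range N, 1 / (y + k) := by
  induction N with
  | zero => simp
  | succ N ih =>
    have h1 : y + ((N : ℝ) + 1) = (y + N) + 1 := by ring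
    have h2 : (0 : ℝ) < y + N := by positivity
    push_cast
    rw [h1, psi_rec h2, ih, Finset.sum_range_succ]
    push_cast
    ring

lemma psi_le_log {y : ℝ} (hy : 0 < y) :
    psi y ≤ Real.log y := by
  have h := Real.convexOn_log_Gamma.deriv_le_slope (Set.mem_Ioi.mpr hy)
    (Set.mem_Ioi.mpr (by linarith : (0:ℝ) < y + 1)) (by linarith) ?_
  · refine h.trans (le_of_eq ?_)
    rw [slope_def_field, show y + 1 - y = (1 : ℝ) by ring, div_one]
    show (Real.log ∘ Real.Gamma) (y + 1) - (Real.log ∘ Real.Gamma) y = _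
    simp only [Function.comp_apply]
    rw [lG_rec hy]
    ring
  · exact diff_lG hy

lemma log_le_psi {y : ℝ} (hy : 0 < y) :
    Real.log y ≤ psi (y + 1) := by
  have h := Real.convexOn_log_Gamma.slope_le_deriv (Set.mem_Ioi.mpr hy)
    (Set.mem_Ioi.mpr (by linarith : (0:ℝ) < y + 1)) (by linarith) ?_
  · refine (le_of_eq ?_).trans h
    rw [slope_def_field, show y + 1 - y = (1 : ℝ) by ring, div_one]
    show _ = (Real.log ∘ Real.Gamma) (y + 1) - (Real.log ∘ Real.Gamma) y
    simp only [Function.comp_apply]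
    rw [lG_rec hy]
    ring
  · exact diff_lG (by linarith)

lemma tendsto_log_diff (c d : ℝ) :
    Filter.Tendsto (fun N : ℕ => Real.log (c + N) - Real.log (d + N))
      Filter.atTop (nhds 0) := by
  have hdN : Filter.Tendsto (fun N : ℕ => d + (N : ℝ)) Filter.atTop Filter.atTop :=
    tendsto_atTop_add_const_left _ d tendsto_natCast_atTop_atTop
  have h1 : Filter.Tendsto (fun N : ℕ => (c - d) / (d + (N : ℝ))) Filter.atTop (nhds 0) :=
    Filter.Tendsto.div_atTop tendsto_const_nhds hdN
  have h2 : Filter.Tendsto (fun N : ℕ => 1 + (c - d) / (d + (N : ℝ))) Filter.atTop (nhds 1) := by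
    simpa using tendsto_const_nhds.add h1
  have h3 : Filter.Tendsto (fun N : ℕ => Real.log (1 + (c - d) / (d + (N : ℝ))))
      Filter.atTop (nhds 0) := by
    have := (Real.continuousAt_log one_ne_zero).tendsto.comp h2
    simpa [Function.comp_def] using this
  refine h3.congr' ?_
  filter_upwards [hdN.eventually_gt_atTop (max 0 (-c + d)),
    hdN.eventually_gt_atTop 0] with N hN hN0
  have hc : 0 < c + N := by
    have := lt_of_le_of_lt (le_max_right 0 (-c + d)) hN
    linarith
  have heq : 1 + (c - d) / (d + (N : ℝ)) = (c + N) / (d + N) := by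
    field_simp
    ring
  rw [heq, Real.log_div hc.ne' hN0.ne']

lemma tendsto_psi_diff {p q : ℝ} (hp : 0 < p) (hq : 0 < q) :
    Filter.Tendsto (fun N : ℕ => psi (p + N) - psi (q + N)) Filter.atTop (nhds 0) := by
  apply tendsto_of_tendsto_of_tendsto_of_le_of_le'
    (tendsto_log_diff (p - 1) q) (tendsto_log_diff p (q - 1))
  · filter_upwards [Filter.eventually_ge_atTop 1] with N hN
    have hN1 : (1 : ℝ) ≤ (N : ℝ) := by exact_mod_cast hN
    have h1 : Real.log (p - 1 + N) ≤ psi (p + N) := by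
      have h0 : (0 : ℝ) < p + N - 1 := by linarith
      have := log_le_psi h0
      rw [show p + (N : ℝ) - 1 + 1 = p + N by ring] at this
      rw [show p - 1 + (N : ℝ) = p + N - 1 by ring]
      exact this
    have h2 : psi (q + N) ≤ Real.log (q + N) := psi_le_log (by positivity)
    linarith
  · filter_upwards [Filter.eventually_ge_atTop 1] with N hN
    have hN1 : (1 : ℝ) ≤ (N : ℝ) := by exact_mod_cast hN
    have h1 : psi (p + N) ≤ Real.log (p + N) := psi_le_log (by positivity)
    have h2 : Real.log (q - 1 + N) ≤ psi (q + N) := by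
      have h0 : (0 : ℝ) < q + N - 1 := by linarith
      have := log_le_psi h0
      rw [show q + (N : ℝ) - 1 + 1 = q + N by ring] at this
      rw [show q - 1 + (N : ℝ) = q + N - 1 by ring]
      exact this
    linarith

lemma hasSum_psi_diff {p q : ℝ} (hp : 0 < p) (hq : 0 < q) (hqp : q ≤ p) :
    HasSum (fun k : ℕ => 1 / (q + k) - 1 / (p + k)) (psi p - psi q) := by
  rw [hasSum_iff_tendsto_nat_of_nonneg]
  · have key : ∀ N : ℕ, ∑ k ∈ Finset.range N, (1 / (q + k) - 1 / (p + k))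
        = (psi p - psi q) - (psi (p + N) - psi (q + N)) := by
      intro N
      have e1 := psi_add_nat hq N
      have e2 := psi_add_nat hp N
      rw [Finset.sum_sub_distrib]
      linarith
    have h := tendsto_const_nhds (x := psi p - psi q) (f := Filter.atTop (α := ℕ))
      |>.sub (tendsto_psi_diff hp hq)
    rw [sub_zero] at h
    refine h.congr fun N => (key N).symm
  · intro k
    have h1 : (0:ℝ) < q + k := by positivity
    have h2 : q + (k:ℝ) ≤ p + k := by linarith
    have := one_div_le_one_div_of_le h1 h2
    linarith


lemma G_val {a x : ℝ} (ha : 0 < a) (hx : |x| < a) :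
    ∑' k : ℕ, (-(x / ((k : ℝ) + a)) - Real.log (1 - x / ((k : ℝ) + a)))
      = psi a * x + Real.log (Real.Gamma (a - x)) - Real.log (Real.Gamma a) := by
  set b := (|x| + a) / 2 with hb_def
  have habs : 0 ≤ |x| := abs_nonneg x
  have hb0 : 0 < b := by rw [hb_def]; positivity
  have hxb : |x| < b := by rw [hb_def]; linarith
  have hba : b < a := by rw [hb_def]; linarith
  set S : Set ℝ := Set.Ioo (-b) b with hS_def
  set g : ℕ → ℝ → ℝ := fun k y => -(y / ((k : ℝ) + a)) - Real.log (1 - y / ((k : ℝ) + a))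
    with hg_def
  set g' : ℕ → ℝ → ℝ := fun k y => 1 / ((k : ℝ) + a - y) - 1 / ((k : ℝ) + a) with hg'_def
  have hka : ∀ k : ℕ, (0 : ℝ) < (k : ℝ) + a := fun k => by positivity
  have hkay : ∀ k : ℕ, ∀ y ∈ S, (0 : ℝ) < (k : ℝ) + a - y := by
    intro k y hy
    have h1 : y < b := hy.2
    have h2 : (0 : ℝ) ≤ (k : ℝ) := Nat.cast_nonneg k
    linarith
  have hderiv : ∀ k : ℕ, ∀ y ∈ S, HasDerivAt (g k) (g' k y) y := by
    intro k y hy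
    have h1 : HasDerivAt (fun y : ℝ => y / ((k : ℝ) + a)) (1 / ((k : ℝ) + a)) y := by
      simpa using (hasDerivAt_id y).div_const ((k : ℝ) + a)
    have h2 : HasDerivAt (fun y : ℝ => 1 - y / ((k : ℝ) + a)) (-(1 / ((k : ℝ) + a))) y := by
      simpa using h1.const_sub 1
    have hne : 1 - y / ((k : ℝ) + a) ≠ 0 := by
      have hpos : 0 < 1 - y / ((k : ℝ) + a) := by
        rw [sub_pos, div_lt_one (hka k)]
        have := hkay k y hy
        linarith
      exact hpos.ne'
    have h3 : HasDerivAt (fun y : ℝ => Real.log (1 - y / ((k : ℝ) + a)))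
        (-(1 / ((k : ℝ) + a)) / (1 - y / ((k : ℝ) + a))) y := h2.log hne
    have h4 := (h1.neg).sub h3
    refine (h4.congr_deriv ?_ : HasDerivAt (g k) _ y)
    have hk0 := (hka k).ne'
    have hky := (hkay k y hy).ne'
    simp only [hg'_def]
    field_simp
    all_goals ring
  set u : ℕ → ℝ := fun k => b * (1 / ((k : ℝ) + (a - b)) ^ (0 + 2)) with hu_def
  have hu : Summable u := (summable_inv_pow (by linarith : (0:ℝ) < a - b) 0).mul_left b
  have hbound : ∀ k : ℕ, ∀ y ∈ S, ‖g' k y‖ ≤ u k := by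
    intro k y hy
    have h1 := hka k
    have h2 := hkay k y hy
    have hval : g' k y = y / (((k : ℝ) + a - y) * ((k : ℝ) + a)) := by
      simp only [hg'_def]
      field_simp
      all_goals ring
    rw [hval, Real.norm_eq_abs, abs_div, abs_of_pos (mul_pos h2 h1)]
    have hyb : |y| ≤ b := by
      rw [abs_le]
      exact ⟨hy.1.le, hy.2.le⟩
    have hab0 : (0 : ℝ) < (k : ℝ) + (a - b) := by
      have : (0 : ℝ) ≤ (k : ℝ) := Nat.cast_nonneg k
      linarith
    have hden : ((k : ℝ) + (a - b)) ^ 2 ≤ ((k : ℝ) + a - y) * ((k : ℝ) + a) := by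
      have e1 : (k : ℝ) + (a - b) ≤ (k : ℝ) + a - y := by linarith [hy.2]
      have e2 : (k : ℝ) + (a - b) ≤ (k : ℝ) + a := by linarith
      nlinarith
    calc |y| / (((k : ℝ) + a - y) * ((k : ℝ) + a))
        ≤ b / (((k : ℝ) + a - y) * ((k : ℝ) + a)) :=
          (div_le_div_iff_of_pos_right (mul_pos h2 h1)).mpr hyb
      _ ≤ b / (((k : ℝ) + (a - b)) ^ (0 + 2)) := by
          apply div_le_div_of_nonneg_left hb0.le (by positivity)
          simpa using hden
      _ = u k := by simp only [hu_def]; rw [mul_one_div]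
  have h0S : (0 : ℝ) ∈ S := ⟨by linarith, hb0⟩
  have hg0fun : (fun k : ℕ => g k 0) = fun _ => (0 : ℝ) := by
    funext k
    simp [hg_def]
  have hg0 : Summable fun k : ℕ => g k 0 := by
    rw [hg0fun]; exact summable_zero
  have key : ∀ y ∈ S, HasDerivAt (fun z => ∑' k, g k z) (∑' k, g' k y) y := fun y hy =>
    hasDerivAt_tsum_of_isPreconnected hu isOpen_Ioo (convex_Ioo _ _).isPreconnected
      hderiv hbound h0S hg0 hy
  have sumg' : ∀ y ∈ S, (∑' k, g' k y) = psi a - psi (a - y) := by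
    intro y hy
    have hay : 0 < a - y := by
      have := hy.2
      linarith
    rcases le_or_gt 0 y with hy0 | hy0
    · have hs := hasSum_psi_diff (p := a) (q := a - y) ha hay (by linarith)
      have heq : (fun k : ℕ => 1 / (a - y + k) - 1 / (a + k)) = fun k => g' k y := by
        funext k
        simp only [hg'_def]
        rw [show a - y + (k : ℝ) = (k : ℝ) + a - y by ring, show a + (k : ℝ) = (k : ℝ) + a by ring]
      rw [heq] at hs
      exact hs.tsum_eq
    · have hs := hasSum_psi_diff (p := a - y) (q := a) hay ha (by linarith)
      have hneg := hs.neg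
      have heq : (fun k : ℕ => -(1 / (a + k) - 1 / (a - y + k))) = fun k => g' k y := by
        funext k
        simp only [hg'_def]
        rw [show a - y + (k : ℝ) = (k : ℝ) + a - y by ring, show a + (k : ℝ) = (k : ℝ) + a by ring]
        ring
      rw [heq] at hneg
      rw [hneg.tsum_eq]
      ring
  set F : ℝ → ℝ := fun y => psi a * y + Real.log (Real.Gamma (a - y)) with hF_def
  have hF : ∀ y ∈ S, HasDerivAt F (psi a - psi (a - y)) y := by
    intro y hy
    have hay : 0 < a - y := by
      have := hy.2
      linarith
    have h1 : HasDerivAt (fun y : ℝ => psi a * y) (psi a) y := by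
      simpa using (hasDerivAt_id y).const_mul (psi a)
    have hin : HasDerivAt (fun y : ℝ => a - y) (-1 : ℝ) y := by
      simpa using (hasDerivAt_id y).const_sub a
    have hout : HasDerivAt (fun z : ℝ => Real.log (Real.Gamma z)) (psi (a - y)) (a - y) :=
      (diff_lG hay).hasDerivAt
    have h2 := hout.comp y hin
    have h3 := h1.add h2
    refine (h3.congr_deriv ?_ : HasDerivAt F _ y)
    ring
  have hD : ∀ y ∈ S, HasDerivAt (fun y => F y - ∑' k, g k y) 0 y := by
    intro y hy
    have h := (hF y hy).sub (key y hy)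
    rwa [sumg' y hy, sub_self] at h
  have hconst : F x - ∑' k, g k x = F 0 - ∑' k, g k 0 := by
    rcases le_total 0 x with hx0 | hx0
    · have hsub : Set.Icc (0 : ℝ) x ⊆ S := by
        intro y hy
        have hy1 : 0 ≤ y := hy.1
        have hy2 : y ≤ x := hy.2
        have hxx : x ≤ |x| := le_abs_self x
        exact ⟨by linarith, by linarith⟩
      have hcont : ContinuousOn (fun y => F y - ∑' k, g k y) (Set.Icc 0 x) :=
        fun y hy => ((hD y (hsub hy)).continuousAt).continuousWithinAt
      have h := constant_of_has_deriv_right_zero hcont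
        (fun y hy => (hD y (hsub (Set.Ico_subset_Icc_self hy))).hasDerivWithinAt)
      exact h x (Set.right_mem_Icc.mpr hx0)
    · have hsub : Set.Icc x (0 : ℝ) ⊆ S := by
        intro y hy
        have hy1 : x ≤ y := hy.1
        have hy2 : y ≤ 0 := hy.2
        have hxx : -|x| ≤ x := neg_abs_le x
        exact ⟨by linarith, by linarith⟩
      have hcont : ContinuousOn (fun y => F y - ∑' k, g k y) (Set.Icc x 0) :=
        fun y hy => ((hD y (hsub hy)).continuousAt).continuousWithinAt
      have h := constant_of_has_deriv_right_zero hcont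
        (fun y hy => (hD y (hsub (Set.Ico_subset_Icc_self hy))).hasDerivWithinAt)
      exact (h 0 (Set.right_mem_Icc.mpr hx0)).symm
  have hg0val : (∑' k : ℕ, g k 0) = 0 := by
    rw [hg0fun]
    exact tsum_zero
  have hF0 : F 0 = Real.log (Real.Gamma a) := by
    simp [hF_def]
  have hFx : F x = psi a * x + Real.log (Real.Gamma (a - x)) := rfl
  have hgoal : (∑' k : ℕ, g k x) = F x - F 0 := by
    rw [hg0val] at hconst
    linarith
  rw [show (fun k : ℕ => -(x / ((k : ℝ) + a)) - Real.log (1 - x / ((k : ℝ) + a)))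
      = fun k => g k x from rfl]
  rw [hgoal, hFx, hF0]

end HHPS


open HHPS in
theorem harmonic_hurwitz_power_series (a x : ℝ) (ha : 0 < a) (hx : |x| < a) :
    ∑' n : ℕ, (harmonic (n + 2) : ℝ) * (hzeta (n + 2) a - x * hzeta (n + 3) a) * x ^ (n + 2) =
      hzeta 2 a * x ^ 2 + digamma a * x +
        Real.log (Real.Gamma (a - x)) - Real.log (Real.Gamma a) := by
  have hka : ∀ k : ℕ, (0 : ℝ) < (k : ℝ) + a := fun k => by positivity
  set t : ℕ → ℝ := fun k => x / ((k : ℝ) + a) with ht_def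
  have hr0 : |x| / a < 1 := (div_lt_one ha).mpr hx
  have hr0n : (0 : ℝ) ≤ |x| / a := by positivity
  have htk : ∀ k, |t k| ≤ |x| / a := by
    intro k
    simp only [ht_def, abs_div]
    rw [abs_of_pos (hka k)]
    exact div_le_div_of_nonneg_left (abs_nonneg x) ha
      (by linarith [Nat.cast_nonneg (α := ℝ) k])
  have htk1 : ∀ k, |t k| < 1 := fun k => lt_of_le_of_lt (htk k) hr0
  set f2 : ℕ → ℕ → ℝ := fun k n => (harmonic (n + 2) : ℝ) * (t k ^ (n + 2) - t k ^ (n + 3))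
    with hf2_def
  have step1 : ∀ n : ℕ,
      (harmonic (n + 2) : ℝ) * (hzeta (n + 2) a - x * hzeta (n + 3) a) * x ^ (n + 2)
      = ∑' k : ℕ, f2 k n := by
    intro n
    have s1 : Summable (fun k : ℕ => 1 / ((k : ℝ) + a) ^ (n + 2)) := summable_inv_pow ha n
    have s2 : Summable (fun k : ℕ => 1 / ((k : ℝ) + a) ^ (n + 3)) := summable_inv_pow ha (n + 1)
    set H : ℝ := (harmonic (n + 2) : ℝ) with hH_def
    calc H * (hzeta (n + 2) a - x * hzeta (n + 3) a) * x ^ (n + 2)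
        = (H * x ^ (n + 2)) * (∑' k : ℕ, 1 / ((k : ℝ) + a) ^ (n + 2))
          - (H * x ^ (n + 2) * x) * (∑' k : ℕ, 1 / ((k : ℝ) + a) ^ (n + 3)) := by
          rw [hzeta, hzeta]; ring
      _ = (∑' k : ℕ, (H * x ^ (n + 2)) * (1 / ((k : ℝ) + a) ^ (n + 2)))
          - (∑' k : ℕ, (H * x ^ (n + 2) * x) * (1 / ((k : ℝ) + a) ^ (n + 3))) := by
          rw [tsum_mul_left, tsum_mul_left]
      _ = ∑' k : ℕ, ((H * x ^ (n + 2)) * (1 / ((k : ℝ) + a) ^ (n + 2))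
          - (H * x ^ (n + 2) * x) * (1 / ((k : ℝ) + a) ^ (n + 3))) :=
          (Summable.tsum_sub (s1.mul_left _) (s2.mul_left _)).symm
      _ = ∑' k : ℕ, f2 k n := by
          apply tsum_congr
          intro k
          simp only [hf2_def, ht_def, hH_def]
          rw [div_pow, div_pow]
          ring
  have hd : Summable (fun k : ℕ => x ^ 2 * (1 / ((k : ℝ) + a) ^ (0 + 2))) :=
    (summable_inv_pow ha 0).mul_left _
  have hsumprod : Summable (fun p : ℕ × ℕ => f2 p.1 p.2) := by
    have hgeom : Summable (fun n : ℕ => (|x| / a) ^ n) := summable_geometric_of_lt_one hr0n hr0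
    have hg : Summable (fun n : ℕ => (n : ℝ) * (|x| / a) ^ n) := by
      simpa using summable_pow_mul_geometric_of_norm_lt_one 1 (r := |x| / a)
        (by rwa [Real.norm_eq_abs, abs_of_nonneg hr0n])
    have hc : Summable (fun n : ℕ => 2 * ((n : ℝ) + 2) * (|x| / a) ^ n) := by
      have h := (hg.mul_left 2).add (hgeom.mul_left 4)
      exact h.congr fun n => by ring
    have hprod := hd.mul_of_nonneg hc (fun k => by positivity) (fun n => by positivity)
    refine Summable.of_norm_bounded hprod ?_
    rintro ⟨k, n⟩
    simp only [Real.norm_eq_abs, hf2_def]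
    have h1 : |(harmonic (n + 2) : ℝ)| ≤ (n : ℝ) + 2 := by
      rw [abs_of_nonneg (harmonic_nonneg_real _)]
      have := harmonic_le_real (n + 2)
      push_cast at this
      linarith
    have h2 : |t k ^ (n + 2) - t k ^ (n + 3)| ≤ 2 * |t k| ^ (n + 2) := by
      have ha1 := abs_sub (t k ^ (n + 2)) (t k ^ (n + 3))
      rw [abs_pow, abs_pow] at ha1
      have hb1 : |t k| ^ (n + 3) ≤ |t k| ^ (n + 2) :=
        pow_le_pow_of_le_one (abs_nonneg _) (htk1 k).le (by omega)
      linarith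
    have h3 : |t k| ^ (n + 2) ≤ (|x| / a) ^ n * (x ^ 2 * (1 / ((k : ℝ) + a) ^ 2)) := by
      have e0 : |t k| ^ (n + 2) = |t k| ^ n * |t k| ^ 2 := by rw [← pow_add]
      have e1 : |t k| ^ n ≤ (|x| / a) ^ n := pow_le_pow_left₀ (abs_nonneg _) (htk k) n
      have e2 : |t k| ^ 2 = x ^ 2 * (1 / ((k : ℝ) + a) ^ 2) := by
        rw [sq_abs]
        simp only [ht_def]
        rw [div_pow]
        ring
      rw [e0, e2]
      apply mul_le_mul_of_nonneg_right e1 (by positivity)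
    calc |(harmonic (n + 2) : ℝ) * (t k ^ (n + 2) - t k ^ (n + 3))|
        = |(harmonic (n + 2) : ℝ)| * |t k ^ (n + 2) - t k ^ (n + 3)| := abs_mul _ _
      _ ≤ ((n : ℝ) + 2) * (2 * |t k| ^ (n + 2)) := by
          apply mul_le_mul h1 h2 (abs_nonneg _) (by positivity)
      _ ≤ ((n : ℝ) + 2) * (2 * ((|x| / a) ^ n * (x ^ 2 * (1 / ((k : ℝ) + a) ^ 2)))) := by
          have hn2 : (0 : ℝ) ≤ (n : ℝ) + 2 := by positivity
          apply mul_le_mul_of_nonneg_left _ hn2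
          apply mul_le_mul_of_nonneg_left h3 (by norm_num)
      _ = x ^ 2 * (1 / ((k : ℝ) + a) ^ (0 + 2)) * (2 * ((n : ℝ) + 2) * (|x| / a) ^ n) := by
          norm_num
          ring
  have hfub : (∑' n : ℕ, ∑' k : ℕ, f2 k n) = ∑' k : ℕ, ∑' n : ℕ, f2 k n :=
    Summable.tsum_comm (f := f2) hsumprod
  have hinner : ∀ k, (∑' n : ℕ, f2 k n) = t k ^ 2 - t k - Real.log (1 - t k) := fun k =>
    (hasSum_inner (htk1 k)).tsum_eq
  have hsq : Summable (fun k : ℕ => t k ^ 2) := hd.congr fun k => by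
    simp only [ht_def]
    rw [div_pow]
    norm_num
    ring
  have hlg : Summable (fun k : ℕ => -(t k) - Real.log (1 - t k)) := by
    refine Summable.of_norm_bounded (hsq.mul_right (1 / (1 - |x| / a))) fun k => ?_
    rw [Real.norm_eq_abs]
    exact abs_neg_log_bound (htk k) hr0
  have hzeta2 : (∑' k : ℕ, t k ^ 2) = hzeta 2 a * x ^ 2 := by
    have he : (fun k : ℕ => t k ^ 2) = fun k : ℕ => x ^ 2 * (1 / ((k : ℝ) + a) ^ 2) := by
      funext k
      simp only [ht_def]
      rw [div_pow]
      ring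
    rw [he, tsum_mul_left, hzeta]
    ring
  have hGval := G_val ha hx
  rw [show (fun k : ℕ => -(x / ((k : ℝ) + a)) - Real.log (1 - x / ((k : ℝ) + a)))
      = fun k : ℕ => -(t k) - Real.log (1 - t k) from rfl] at hGval
  calc ∑' n : ℕ, (harmonic (n + 2) : ℝ) * (hzeta (n + 2) a - x * hzeta (n + 3) a) * x ^ (n + 2)
      = ∑' n : ℕ, ∑' k : ℕ, f2 k n := tsum_congr step1
    _ = ∑' k : ℕ, ∑' n : ℕ, f2 k n := hfub
    _ = ∑' k : ℕ, (t k ^ 2 + (-(t k) - Real.log (1 - t k))) := by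
        apply tsum_congr
        intro k
        rw [hinner k]
        ring
    _ = (∑' k : ℕ, t k ^ 2) + ∑' k : ℕ, (-(t k) - Real.log (1 - t k)) := Summable.tsum_add hsq hlg
    _ = hzeta 2 a * x ^ 2 + (psi a * x + Real.log (Real.Gamma (a - x))
        - Real.log (Real.Gamma a)) := by rw [hzeta2, hGval]
    _ = hzeta 2 a * x ^ 2 + digamma a * x
        + Real.log (Real.Gamma (a - x)) - Real.log (Real.Gamma a) := by
        rw [psi_eq_digamma ha]
        ring
end
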